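/- arXiv:1906.08571 — 5 statements merged into one kernel-verified Lean document; each statement's English description precedes it below -/
import Mathlib

section
/- Consider the optimal control problem: minimize f₀(x(t₁)) over trajectories of the system ẋ = φ(t,x,u(t)), u(t) ∈ U a.e. on [t₀,t₁], with endpoint constraints x(t₀) = x₀ and g(x(t₁)) = 0. Assume U is compact and nonempty, the set of admissible trajectories is nonempty, and there exists a constant K > 0 such that |⟨x, φ(t,x,u)⟩| ≤ K(|x|² + 1) for all t ∈ [t₀,t₁], x ∈ ℝⁿ and u ∈ U. Then the problem has a global infimum: there exists x̂ in the closure (in C([t₀,t₁],ℝⁿ)) of the set of admissible trajectories such that f₀(x̂(t₁)) ≤ f₀(x(t₁)) for every admissible trajectory x. -/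
open MeasureTheory Set intervalIntegral Filter Topology

noncomputable section

/-- `ℝⁿ` with the Euclidean norm. -/
abbrev En (n : ℕ) := EuclideanSpace ℝ (Fin n)

/-- An essentially bounded measurable control on `[t₀,t₁]` with values in `U` a.e. -/
def IsLinftyControl (t₀ t₁ : ℝ) {r : ℕ} (U : Set (En r)) (u : ℝ → En r) : Prop :=
  Measurable u ∧ (∃ C : ℝ, ∀ᵐ t ∂(volume.restrict (Icc t₀ t₁)), ‖u t‖ ≤ C) ∧
    ∀ᵐ t ∂(volume.restrict (Icc t₀ t₁)), u t ∈ U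

/-- A trajectory `x` is admissible for `ẋ = φ(t,x,u(t))`, `u(t) ∈ U` a.e.,
`x(t₀) = x₀`, `g(x(t₁)) = 0`, if there is an `L∞` control realizing it
(the ODE being understood in the integral form, `x` being absolutely continuous). -/
def Admissible (t₀ t₁ : ℝ) {n r m : ℕ} (φ : ℝ → En n → En r → En n)
    (U : Set (En r)) (x₀ : En n) (g : En n → En m) (x : ℝ → En n) : Prop :=
  ∃ u : ℝ → En r, IsLinftyControl t₀ t₁ U u ∧
    (∀ t ∈ Icc t₀ t₁, x t = x₀ + ∫ s in t₀..t, φ s (x s) (u s)) ∧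
    g (x t₁) = 0

set_option maxHeartbeats 1000000

theorem const_of_sq {a b C : ℝ} (H : ℝ → ℝ) (hab : a ≤ b)
    (h : ∀ s t : ℝ, a ≤ s → s ≤ t → t ≤ b → |H t - H s| ≤ C * (t - s) ^ 2) :
    H b = H a := by
  have key : ∀ N : ℕ, 0 < N → |H b - H a| ≤ C * (b - a) ^ 2 / N := by
    intro N hN
    set δ : ℝ := (b - a) / N with hδ
    have hδ0 : 0 ≤ δ := div_nonneg (by linarith) (Nat.cast_nonneg N)
    have hNδ : (N : ℝ) * δ = b - a := by
      rw [hδ]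
      field_simp [Nat.cast_ne_zero.2 hN.ne']
    have htel : H b - H a = ∑ i ∈ Finset.range N, (H (a + (i + 1 : ℕ) * δ) - H (a + (i : ℕ) * δ)) := by
      rw [Finset.sum_range_sub (fun i => H (a + (i : ℕ) * δ))]
      simp [hNδ]
    rw [htel]
    calc |∑ i ∈ Finset.range N, (H (a + (i + 1 : ℕ) * δ) - H (a + (i : ℕ) * δ))|
        ≤ ∑ i ∈ Finset.range N, |H (a + (i + 1 : ℕ) * δ) - H (a + (i : ℕ) * δ)| :=
          Finset.abs_sum_le_sum_abs _ _
      _ ≤ ∑ _i ∈ Finset.range N, C * δ ^ 2 := by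
          refine Finset.sum_le_sum fun i hi => ?_
          have hi' : (i : ℝ) + 1 ≤ N := by
            exact_mod_cast Nat.succ_le_of_lt (Finset.mem_range.1 hi)
          have h1 : a ≤ a + (i : ℕ) * δ := by
            have : 0 ≤ (i : ℝ) * δ := mul_nonneg (Nat.cast_nonneg i) hδ0
            linarith
          have h2 : a + (i : ℕ) * δ ≤ a + ((i + 1 : ℕ) : ℝ) * δ := by
            push_cast
            nlinarith
          have h3 : a + ((i + 1 : ℕ) : ℝ) * δ ≤ b := by
            push_cast
            nlinarith [mul_le_mul_of_nonneg_right hi' hδ0]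
          have := h _ _ h1 h2 h3
          convert this using 2
          case e'_2 => rfl
          push_cast
          ring
      _ = N * (C * δ ^ 2) := by rw [Finset.sum_const, Finset.card_range]; ring
      _ = C * (b - a) ^ 2 / N := by
          rw [hδ]
          field_simp
  have hlim : ∀ ε > 0, |H b - H a| ≤ ε := by
    intro ε hε
    obtain ⟨N, hN⟩ := exists_nat_gt (max 1 (C * (b - a) ^ 2 / ε))
    have hN0 : 0 < N := by
      have h1 : (1 : ℝ) < N := lt_of_le_of_lt (le_max_left _ _) hN
      exact_mod_cast lt_trans zero_lt_one h1
    refine le_trans (key N hN0) ?_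
    have hNpos : (0 : ℝ) < N := by exact_mod_cast hN0
    rw [div_le_iff₀ hNpos]
    have h2 : C * (b - a) ^ 2 / ε < N := lt_of_le_of_lt (le_max_right _ _) hN
    rw [div_lt_iff₀ hε] at h2
    linarith
  have : |H b - H a| ≤ 0 := le_of_forall_gt_imp_ge_of_dense fun ε hε => hlim ε hε
  have := abs_nonneg (H b - H a)
  have : |H b - H a| = 0 := le_antisymm ‹|H b - H a| ≤ 0› this
  linarith [abs_eq_zero.1 this, sub_eq_zero.1 (abs_eq_zero.1 this)]

theorem key_estimates {t₀ t₁ : ℝ} {n r : ℕ} {φ : ℝ → En n → En r → En n}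
    {U : Set (En r)} {x₀ : En n} {K : ℝ}
    (ht : t₀ ≤ t₁)
    (hφ : Continuous fun p : ℝ × En n × En r => φ p.1 p.2.1 p.2.2)
    (hUc : IsCompact U) (hUne : U.Nonempty)
    (hK : 0 < K)
    (hgrowth : ∀ t ∈ Icc t₀ t₁, ∀ x : En n, ∀ u ∈ U,
      |(inner ℝ x (φ t x u) : ℝ)| ≤ K * (‖x‖ ^ 2 + 1))
    {R D : ℝ} (hR : R = Real.sqrt ((‖x₀‖ ^ 2 + 1) * Real.exp (2 * K * (t₁ - t₀))))
    (hD : ∀ t ∈ Icc t₀ t₁, ∀ y : En n, ‖y‖ ≤ R → ∀ v ∈ U, ‖φ t y v‖ ≤ D)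
    (x : ℝ → En n) (u : ℝ → En r) (hu : IsLinftyControl t₀ t₁ U u)
    (hx : ∀ t ∈ Icc t₀ t₁, x t = x₀ + ∫ s in t₀..t, φ s (x s) (u s)) :
    ContinuousOn x (Icc t₀ t₁) ∧ (∀ t ∈ Icc t₀ t₁, ‖x t‖ ≤ R) ∧
      (∀ s ∈ Icc t₀ t₁, ∀ t ∈ Icc t₀ t₁, ‖x t - x s‖ ≤ D * |t - s|) := by
  classical
  obtain ⟨humeas, -, huU⟩ := hu
  obtain ⟨u₁, hu₁⟩ := hUne
  set u' : ℝ → En r := fun t => if u t ∈ U then u t else u₁ with hu'def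
  have hu'mem : ∀ t, u' t ∈ U := fun t => by
    by_cases h : u t ∈ U <;> simp [hu'def, h, hu₁]
  have hu'meas : Measurable u' := by
    refine Measurable.ite ?_ humeas measurable_const
    exact humeas hUc.isClosed.measurableSet
  have hnull : volume ({t | ¬ u t ∈ U} ∩ Icc t₀ t₁) = 0 := by
    have h1 := huU
    rw [MeasureTheory.ae_iff] at h1
    have h2 : MeasurableSet {a : ℝ | ¬ u a ∈ U} := (humeas hUc.isClosed.measurableSet).compl
    rwa [Measure.restrict_apply h2] at h1
  set F : ℝ → En n := fun s => φ s (x s) (u' s) with hFdef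
  have hxF : ∀ t ∈ Icc t₀ t₁, x t = x₀ + ∫ s in t₀..t, F s := by
    intro t htt
    rw [hx t htt]
    congr 1
    refine intervalIntegral.integral_congr_ae ?_
    rw [MeasureTheory.ae_iff]
    refine measure_mono_null ?_ hnull
    intro s hs
    simp only [mem_setOf_eq, Classical.not_imp] at hs
    refine ⟨fun hsU => hs.2 ?_, ?_⟩
    · rw [hFdef, hu'def]
      simp [hsU]
    · have hsub : uIoc t₀ t ⊆ Icc t₀ t₁ := by
        rw [uIoc_of_le htt.1]
        exact fun y hy => ⟨hy.1.le, le_trans hy.2 htt.2⟩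
      exact hsub hs.1
  have hxt₀ : x t₀ = x₀ := by
    rw [hxF t₀ (left_mem_Icc.2 ht), intervalIntegral.integral_same, add_zero]
  set A : Set ℝ := {a | a ∈ Icc t₀ t₁ ∧ IntegrableOn F (Ioc t₀ a)} with hAdef
  have hA0 : t₀ ∈ A := by
    refine ⟨left_mem_Icc.2 ht, ?_⟩
    rw [Ioc_self]
    exact integrableOn_empty
  have good : ∀ a ∈ A, ContinuousOn x (Icc t₀ a) ∧ ∀ s ∈ Icc t₀ a, ‖x s‖ ≤ R := by
    rintro a ⟨⟨hta, hat1⟩, hint⟩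
    have hIccInt : IntegrableOn F (Icc t₀ a) := by
      rwa [integrableOn_Icc_iff_integrableOn_Ioc]
    have hcont : ContinuousOn x (Icc t₀ a) := by
      have h1 := intervalIntegral.continuousOn_primitive (μ := volume) (f := F) (a := t₀) (b := a) hIccInt
      have h2 : ContinuousOn (fun t => x₀ + ∫ s in Ioc t₀ t, F s) (Icc t₀ a) :=
        continuousOn_const.add h1
      refine h2.congr ?_
      intro t ht'
      rw [hxF t ⟨ht'.1, le_trans ht'.2 hat1⟩, intervalIntegral.integral_of_le ht'.1]
    obtain ⟨B, hB⟩ := isCompact_Icc.exists_bound_of_continuousOn hcont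
    obtain ⟨D₁, hD₁⟩ :=
      ((isCompact_Icc (a := t₀) (b := t₁)).prod ((isCompact_closedBall (0 : En n) B).prod hUc)).exists_bound_of_continuousOn
      hφ.continuousOn
    set Dl : ℝ := max D₁ 0 with hDl
    have hDl0 : 0 ≤ Dl := le_max_right _ _
    have hFb : ∀ s ∈ Icc t₀ a, ‖F s‖ ≤ Dl := by
      intro s hs
      refine le_trans (hD₁ (s, x s, u' s) ?_) (le_max_left _ _)
      refine ⟨⟨hs.1, le_trans hs.2 hat1⟩, ?_, hu'mem s⟩
      simpa [Metric.mem_closedBall, dist_eq_norm] using hB s hs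
    have hFint' : ∀ s ∈ Icc t₀ a, ∀ t ∈ Icc t₀ a, IntervalIntegrable F volume s t := by
      intro s hs t ht'
      rw [intervalIntegrable_iff]
      refine hint.mono_set ?_
      rw [uIoc]
      exact Ioc_subset_Ioc (le_min hs.1 ht'.1) (max_le hs.2 ht'.2)
    have hxdiff : ∀ s ∈ Icc t₀ a, ∀ t ∈ Icc t₀ a, x t - x s = ∫ τ in s..t, F τ := by
      intro s hs t ht'
      rw [hxF t ⟨ht'.1, le_trans ht'.2 hat1⟩, hxF s ⟨hs.1, le_trans hs.2 hat1⟩]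
      have h1 := intervalIntegral.integral_interval_sub_left
        (hFint' t₀ (left_mem_Icc.2 hta) t ht') (hFint' t₀ (left_mem_Icc.2 hta) s hs)
      rw [← h1]
      abel
    have hlip : ∀ s ∈ Icc t₀ a, ∀ t ∈ Icc t₀ a, ‖x t - x s‖ ≤ Dl * |t - s| := by
      intro s hs t ht'
      rw [hxdiff s hs t ht']
      refine intervalIntegral.norm_integral_le_of_norm_le_const ?_
      intro τ hτ
      refine hFb τ ?_
      rw [uIoc] at hτ
      exact ⟨le_trans (le_min hs.1 ht'.1) hτ.1.le, le_trans hτ.2 (max_le hs.2 ht'.2)⟩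
    have hinner_int : ∀ y : ℝ → En n, ContinuousOn y (Icc t₀ a) →
        ∀ s ∈ Icc t₀ a, ∀ t ∈ Icc t₀ a, s ≤ t →
        IntegrableOn (fun τ => (inner ℝ (y τ) (F τ) : ℝ)) (Ioc s t) := by
      intro y hy s hs t ht' hst
      have hsub : Ioc s t ⊆ Icc t₀ a := fun τ hτ => ⟨le_trans hs.1 hτ.1.le, le_trans hτ.2 ht'.2⟩
      have hFi : IntegrableOn F (Ioc s t) := hint.mono_set (Ioc_subset_Ioc hs.1 ht'.2)
      have hymeas : AEStronglyMeasurable y (volume.restrict (Ioc s t)) :=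
        (hy.mono hsub).aestronglyMeasurable measurableSet_Ioc
      obtain ⟨By, hBy⟩ := isCompact_Icc.exists_bound_of_continuousOn hy
      refine Integrable.mono' (hFi.norm.const_mul By) (hymeas.inner hFi.aestronglyMeasurable) ?_
      filter_upwards [ae_restrict_mem measurableSet_Ioc] with τ hτ
      calc ‖(inner ℝ (y τ) (F τ) : ℝ)‖ ≤ ‖y τ‖ * ‖F τ‖ := norm_inner_le_norm _ _
        _ ≤ By * ‖F τ‖ := mul_le_mul_of_nonneg_right (hBy τ (hsub hτ)) (norm_nonneg _)
    have hginta : ∀ y : ℝ → En n, ContinuousOn y (Icc t₀ a) →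
        ∀ s ∈ Icc t₀ a, ∀ t ∈ Icc t₀ a,
        IntervalIntegrable (fun τ => (inner ℝ (y τ) (F τ) : ℝ)) volume s t := by
      intro y hy s hs t ht'
      rcases le_total s t with h | h
      · rw [intervalIntegrable_iff_integrableOn_Ioc_of_le h]
        exact hinner_int y hy s hs t ht' h
      · refine IntervalIntegrable.symm ?_
        rw [intervalIntegrable_iff_integrableOn_Ioc_of_le h]
        exact hinner_int y hy t ht' s hs h
    set g : ℝ → ℝ := fun s => (inner ℝ (x s) (F s) : ℝ) with hgdef
    set H : ℝ → ℝ := fun t => ‖x t‖ ^ 2 - 2 * ∫ s in t₀..t, g s with hHdef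
    have hHq : ∀ s t : ℝ, t₀ ≤ s → s ≤ t → t ≤ a → |H t - H s| ≤ 3 * Dl ^ 2 * (t - s) ^ 2 := by
      intro s t h1 h2 h3
      have hs : s ∈ Icc t₀ a := ⟨h1, le_trans h2 h3⟩
      have ht' : t ∈ Icc t₀ a := ⟨le_trans h1 h2, h3⟩
      have hsubst : Ioc s t ⊆ Icc t₀ a := fun τ hτ => ⟨le_trans h1 hτ.1.le, le_trans hτ.2 h3⟩
      have hFi : IntegrableOn F (Ioc s t) := hint.mono_set (Ioc_subset_Ioc h1 h3)
      have e1 : (∫ τ in t₀..t, g τ) - (∫ τ in t₀..s, g τ) = ∫ τ in s..t, g τ :=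
        intervalIntegral.integral_interval_sub_left
          (hginta x hcont t₀ (left_mem_Icc.2 hta) t ht') (hginta x hcont t₀ (left_mem_Icc.2 hta) s hs)
      have e2 : ∫ τ in s..t, g τ =
          (inner ℝ (x s) (x t - x s) : ℝ) + ∫ τ in s..t, (inner ℝ (x τ - x s) (F τ) : ℝ) := by
        have i1 : IntervalIntegrable (fun τ => (inner ℝ (x s) (F τ) : ℝ)) volume s t :=
          hginta (fun _ => x s) continuousOn_const s hs t ht'
        have i2 : IntervalIntegrable (fun τ => (inner ℝ (x τ - x s) (F τ) : ℝ)) volume s t :=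
          hginta (fun τ => x τ - x s) (hcont.sub continuousOn_const) s hs t ht'
        have e3 : ∀ τ, g τ = (inner ℝ (x s) (F τ) : ℝ) + (inner ℝ (x τ - x s) (F τ) : ℝ) := by
          intro τ
          rw [hgdef]
          simp [inner_sub_left]
        have e5 : (∫ τ in s..t, (inner ℝ (x s) (F τ) : ℝ)) = (inner ℝ (x s) (x t - x s) : ℝ) := by
          rw [hxdiff s hs t ht', intervalIntegral.integral_of_le h2,
            intervalIntegral.integral_of_le h2, integral_inner hFi]
        calc ∫ τ in s..t, g τ
            = ∫ τ in s..t, ((inner ℝ (x s) (F τ) : ℝ) + (inner ℝ (x τ - x s) (F τ) : ℝ)) := by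
              simp_rw [e3]
          _ = (∫ τ in s..t, (inner ℝ (x s) (F τ) : ℝ))
                + ∫ τ in s..t, (inner ℝ (x τ - x s) (F τ) : ℝ) :=
              intervalIntegral.integral_add i1 i2
          _ = _ := by rw [e5]
      have hsq : ‖x t‖ ^ 2 - ‖x s‖ ^ 2 - 2 * (inner ℝ (x s) (x t - x s) : ℝ) = ‖x t - x s‖ ^ 2 := by
        rw [← real_inner_self_eq_norm_sq, ← real_inner_self_eq_norm_sq,
          ← real_inner_self_eq_norm_sq]
        simp only [inner_sub_left, inner_sub_right]
        rw [real_inner_comm (x s) (x t)]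
        ring
      have e4 : H t - H s = ‖x t - x s‖ ^ 2 - 2 * ∫ τ in s..t, (inner ℝ (x τ - x s) (F τ) : ℝ) := by
        have h5 : H t - H s = (‖x t‖ ^ 2 - ‖x s‖ ^ 2)
            - 2 * ((∫ τ in t₀..t, g τ) - (∫ τ in t₀..s, g τ)) := by
          simp only [hHdef]
          ring
        rw [h5, e1, e2]
        linarith
      have habs2 : |t - s| = t - s := abs_of_nonneg (by linarith)
      have b1 : ‖x t - x s‖ ^ 2 ≤ Dl ^ 2 * (t - s) ^ 2 := by
        have h6 := hlip s hs t ht'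
        rw [habs2] at h6
        nlinarith [norm_nonneg (x t - x s)]
      have b2 : |∫ τ in s..t, (inner ℝ (x τ - x s) (F τ) : ℝ)| ≤ Dl ^ 2 * (t - s) * |t - s| := by
        have h7 : ∀ τ ∈ uIoc s t, ‖(inner ℝ (x τ - x s) (F τ) : ℝ)‖ ≤ Dl ^ 2 * (t - s) := by
          intro τ hτ
          rw [uIoc_of_le h2] at hτ
          have h8 : ‖x τ - x s‖ ≤ Dl * (t - s) := by
            have h9 := hlip s hs τ (hsubst hτ)
            have h10 : |τ - s| = τ - s := abs_of_nonneg (by linarith [hτ.1.le])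
            rw [h10] at h9
            nlinarith [hτ.2]
          calc ‖(inner ℝ (x τ - x s) (F τ) : ℝ)‖ ≤ ‖x τ - x s‖ * ‖F τ‖ := norm_inner_le_norm _ _
            _ ≤ (Dl * (t - s)) * Dl := by
                refine mul_le_mul h8 (hFb τ (hsubst hτ)) (norm_nonneg _) ?_
                nlinarith
            _ = Dl ^ 2 * (t - s) := by ring
        have := intervalIntegral.norm_integral_le_of_norm_le_const h7
        simpa [Real.norm_eq_abs] using this
      rw [habs2] at b2
      have b2' := abs_le.1 b2
      rw [e4, abs_le]
      constructor <;> nlinarith [norm_nonneg (x t - x s), b1]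
    have hHconst : ∀ t ∈ Icc t₀ a, H t = H t₀ := fun t ht' =>
      const_of_sq H ht'.1 fun s τ h1 h2 h3 => hHq s τ h1 h2 (le_trans h3 ht'.2)
    have hident : ∀ t ∈ Icc t₀ a, ‖x t‖ ^ 2 = ‖x₀‖ ^ 2 + 2 * ∫ s in t₀..t, g s := by
      intro t ht'
      have h1 := hHconst t ht'
      simp only [hHdef, intervalIntegral.integral_same, hxt₀] at h1
      linarith
    set ψ : ℝ → ℝ := fun s => ‖x ((projIcc t₀ a hta s : ℝ))‖ ^ 2 with hψdef
    have hψcont : Continuous ψ := by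
      have h1 : Continuous fun p : Icc t₀ a => ‖x (p : ℝ)‖ ^ 2 :=
        ((continuousOn_iff_continuous_restrict.1 hcont).norm.pow 2)
      exact h1.comp continuous_projIcc
    have hψeq : ∀ s ∈ Icc t₀ a, ψ s = ‖x s‖ ^ 2 := by
      intro s hs
      rw [hψdef]
      simp [projIcc_of_mem hta hs]
    have hψnn : ∀ s, 0 ≤ ψ s := fun s => by rw [hψdef]; positivity
    set W : ℝ → ℝ := fun t => ‖x₀‖ ^ 2 + ∫ s in t₀..t, 2 * K * (ψ s + 1) with hWdef
    have hcψ : Continuous fun s => 2 * K * (ψ s + 1) := by fun_prop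
    have hWd : ∀ t : ℝ, HasDerivAt W (2 * K * (ψ t + 1)) t := fun t =>
      ((hcψ.integral_hasStrictDerivAt t₀ t).hasDerivAt).const_add _
    have hψW : ∀ t ∈ Icc t₀ a, ψ t ≤ W t := by
      intro t ht'
      rw [hψeq t ht']
      rw [hident t ht']
      simp only [hWdef]
      have h2 : 2 * ∫ s in t₀..t, g s = ∫ s in t₀..t, 2 * g s :=
        (intervalIntegral.integral_const_mul 2 g).symm
      rw [h2]
      have h3 : ∫ s in t₀..t, 2 * g s ≤ ∫ s in t₀..t, 2 * K * (ψ s + 1) := by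
        refine intervalIntegral.integral_mono_on ht'.1
          ((hginta x hcont t₀ (left_mem_Icc.2 hta) t ht').const_mul 2)
          (hcψ.intervalIntegrable _ _) ?_
        intro s hs'
        have hs : s ∈ Icc t₀ a := ⟨hs'.1, le_trans hs'.2 ht'.2⟩
        have h4 := hgrowth s ⟨hs.1, le_trans hs.2 hat1⟩ (x s) (u' s) (hu'mem s)
        have h5 : g s ≤ K * (‖x s‖ ^ 2 + 1) := le_trans (le_abs_self _) h4
        rw [hψeq s hs]
        linarith
      linarith
    set E : ℝ → ℝ := fun t => Real.exp (-(2 * K) * (t - t₀)) with hEdef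
    have hEd : ∀ t : ℝ, HasDerivAt E (E t * (-(2 * K))) t := by
      intro t
      have h1 : HasDerivAt (fun s : ℝ => -(2 * K) * (s - t₀)) (-(2 * K)) t := by
        simpa using ((hasDerivAt_id t).sub_const t₀).const_mul (-(2 * K))
      simpa [hEdef, mul_comm] using h1.exp
    set G : ℝ → ℝ := fun t => (W t + 1) * E t with hGdef
    have hGd : ∀ t : ℝ, HasDerivAt G
        ((2 * K * (ψ t + 1)) * E t + (W t + 1) * (E t * (-(2 * K)))) t :=
      fun t => ((hWd t).add_const 1).mul (hEd t)
    have hGanti : AntitoneOn G (Icc t₀ a) := by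
      refine antitoneOn_of_deriv_nonpos (convex_Icc _ _) ?_ ?_ ?_
      · exact (continuous_iff_continuousAt.2 fun t => (hGd t).continuousAt).continuousOn
      · exact fun t _ => (hGd t).differentiableAt.differentiableWithinAt
      · intro t ht'
        rw [interior_Icc] at ht'
        rw [(hGd t).deriv]
        have h1 := hψW t ⟨ht'.1.le, ht'.2.le⟩
        have h2 : 0 < E t := Real.exp_pos _
        nlinarith [mul_nonneg (mul_nonneg (by linarith : (0:ℝ) ≤ 2 * K) h2.le) (sub_nonneg.2 h1)]
    have hbound : ∀ t ∈ Icc t₀ a, ‖x t‖ ≤ R := by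
      intro t ht'
      have h1 : G t ≤ G t₀ := hGanti (left_mem_Icc.2 hta) ht' ht'.1
      have hWt₀ : W t₀ = ‖x₀‖ ^ 2 := by simp [hWdef]
      have hEt₀ : E t₀ = 1 := by simp [hEdef]
      have h2 : G t₀ = ‖x₀‖ ^ 2 + 1 := by rw [hGdef]; simp only [hWt₀, hEt₀]; ring
      set e : ℝ := Real.exp (2 * K * (t - t₀)) with hedef
      have hEe : E t = e⁻¹ := by
        rw [hEdef, hedef, ← Real.exp_neg]
        ring_nf
      have he : 0 < e := Real.exp_pos _
      have h3 : (W t + 1) * e⁻¹ ≤ ‖x₀‖ ^ 2 + 1 := by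
        have h3' : G t = (W t + 1) * E t := rfl
        rw [h3', hEe] at h1
        linarith [h2 ▸ h1]
      have h4 : W t + 1 ≤ (‖x₀‖ ^ 2 + 1) * e := by
        have h5 := mul_le_mul_of_nonneg_right h3 he.le
        rwa [mul_assoc, inv_mul_cancel₀ he.ne', mul_one] at h5
      have h6 : ψ t ≤ (‖x₀‖ ^ 2 + 1) * e - 1 := by linarith [hψW t ht']
      have h7 : e ≤ Real.exp (2 * K * (t₁ - t₀)) := by
        rw [hedef]
        refine Real.exp_le_exp.2 ?_
        nlinarith [ht'.2, hat1]
      have h8 : ‖x t‖ ^ 2 ≤ (‖x₀‖ ^ 2 + 1) * Real.exp (2 * K * (t₁ - t₀)) := by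
        rw [← hψeq t ht']
        nlinarith [hψnn t, sq_nonneg ‖x₀‖]
      rw [hR]
      calc ‖x t‖ = Real.sqrt (‖x t‖ ^ 2) := (Real.sqrt_sq (norm_nonneg _)).symm
        _ ≤ _ := Real.sqrt_le_sqrt h8
    exact ⟨hcont, hbound⟩
  have hAbdd : BddAbove A := ⟨t₁, fun y hy => hy.1.2⟩
  have hAne : A.Nonempty := ⟨t₀, hA0⟩
  set τ := sSup A with hτdef
  have hτ1 : τ ≤ t₁ := csSup_le hAne fun y hy => hy.1.2
  have hτ0 : t₀ ≤ τ := le_csSup hAbdd hA0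
  have hτA : τ ∈ A := by
    rcases eq_or_lt_of_le hτ0 with h | h
    · rw [← h]; exact hA0
    · refine ⟨⟨hτ0, hτ1⟩, ?_⟩
      rw [integrableOn_Ioc_iff_integrableOn_Ioo]
      have hsub : ∀ s, s < τ → ∃ b ∈ A, s < b := fun s hs => exists_lt_of_lt_csSup hAne hs
      have hcIoo : ContinuousOn x (Ioo t₀ τ) := by
        intro s hs
        obtain ⟨b, hbA, hsb⟩ := hsub s hs.2
        have hcb := (good b hbA).1
        have h1 : ContinuousWithinAt x (Icc t₀ b) s := hcb s ⟨hs.1.le, hsb.le⟩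
        have h2 : ContinuousWithinAt x (Ioo t₀ τ ∩ Iio b) s :=
          h1.mono fun y hy => ⟨hy.1.1.le, hy.2.le⟩
        rwa [continuousWithinAt_inter (Iio_mem_nhds hsb)] at h2
      have hbnd : ∀ s ∈ Ioo t₀ τ, ‖x s‖ ≤ R := by
        intro s hs
        obtain ⟨b, hbA, hsb⟩ := hsub s hs.2
        exact (good b hbA).2 s ⟨hs.1.le, hsb.le⟩
      have hxm : AEStronglyMeasurable x (volume.restrict (Ioo t₀ τ)) :=
        hcIoo.aestronglyMeasurable measurableSet_Ioo
      have hFm : AEStronglyMeasurable F (volume.restrict (Ioo t₀ τ)) := by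
        have h1 : AEStronglyMeasurable (fun s => (s, x s, u' s) : ℝ → ℝ × En n × En r)
            (volume.restrict (Ioo t₀ τ)) :=
          aestronglyMeasurable_id.prodMk (hxm.prodMk hu'meas.aestronglyMeasurable)
        exact hφ.comp_aestronglyMeasurable h1
      refine Integrable.mono' (g := fun _ => D) ?_ hFm ?_
      · exact integrableOn_const measure_Ioo_lt_top.ne
      · filter_upwards [ae_restrict_mem measurableSet_Ioo] with s hs
        exact hD s ⟨hs.1.le, le_trans hs.2.le hτ1⟩ (x s) (hbnd s hs) (u' s) (hu'mem s)
  have ht₁A : t₁ ∈ A := by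
    by_contra hc
    have hτlt : τ < t₁ := lt_of_le_of_ne hτ1 fun h => hc (h ▸ hτA)
    have hxconst : ∀ t, τ < t → t ≤ t₁ → x t = x₀ := by
      intro t h1 h2
      have h3 : ¬ IntervalIntegrable F volume t₀ t := by
        rw [intervalIntegrable_iff_integrableOn_Ioc_of_le (le_trans hτ0 h1.le)]
        intro h4
        have h5 : t ∈ A := ⟨⟨le_trans hτ0 h1.le, h2⟩, h4⟩
        exact absurd (le_csSup hAbdd h5) (not_le.2 h1)
      rw [hxF t ⟨le_trans hτ0 h1.le, h2⟩, intervalIntegral.integral_undef h3, add_zero]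
    have hx₀R : ‖x₀‖ ≤ R := by
      rw [← hxt₀]
      exact (good t₀ hA0).2 t₀ (left_mem_Icc.2 le_rfl)
    have hInt2 : IntegrableOn F (Ioc τ t₁) := by
      have hcongr : EqOn F (fun s => φ s x₀ (u' s)) (Ioc τ t₁) := by
        intro s hs
        rw [hFdef]
        simp only []
        rw [hxconst s hs.1 hs.2]
      rw [integrableOn_congr_fun hcongr measurableSet_Ioc]
      have hFm : AEStronglyMeasurable (fun s => φ s x₀ (u' s)) (volume.restrict (Ioc τ t₁)) := by
        have h1 : AEStronglyMeasurable (fun s => (s, x₀, u' s) : ℝ → ℝ × En n × En r)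
            (volume.restrict (Ioc τ t₁)) :=
          aestronglyMeasurable_id.prodMk
            (aestronglyMeasurable_const.prodMk hu'meas.aestronglyMeasurable)
        exact hφ.comp_aestronglyMeasurable h1
      refine Integrable.mono' (g := fun _ => D) ?_ hFm ?_
      · exact integrableOn_const measure_Ioc_lt_top.ne
      · filter_upwards [ae_restrict_mem measurableSet_Ioc] with s hs
        exact hD s ⟨le_trans hτ0 hs.1.le, hs.2⟩ x₀ hx₀R (u' s) (hu'mem s)
    refine hc ⟨right_mem_Icc.2 ht, ?_⟩
    have h6 := hτA.2.union hInt2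
    rwa [Ioc_union_Ioc_eq_Ioc hτ0 hτlt.le] at h6
  obtain ⟨hcont, hbound⟩ := good t₁ ht₁A
  refine ⟨hcont, hbound, ?_⟩
  intro s hs t ht'
  have hFII : ∀ c ∈ Icc t₀ t₁, IntervalIntegrable F volume t₀ c := by
    intro c hc
    rw [intervalIntegrable_iff_integrableOn_Ioc_of_le hc.1]
    exact ht₁A.2.mono_set (Ioc_subset_Ioc le_rfl hc.2)
  have hxd : x t - x s = ∫ τ in s..t, F τ := by
    rw [hxF t ht', hxF s hs]
    have h1 := intervalIntegral.integral_interval_sub_left (hFII t ht') (hFII s hs)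
    rw [← h1]
    abel
  rw [hxd]
  refine intervalIntegral.norm_integral_le_of_norm_le_const ?_
  intro τ hτ
  have hτm : τ ∈ Icc t₀ t₁ := by
    rw [uIoc] at hτ
    exact ⟨le_trans (le_min hs.1 ht'.1) hτ.1.le, le_trans hτ.2 (max_le hs.2 ht'.2)⟩
  exact hD τ hτm (x τ) (hbound τ hτm) (u' τ) (hu'mem τ)

/-- **Theorem 1 (existence of a global infimum).** -/
theorem existence_of_global_infimum
    (t₀ t₁ : ℝ) (ht : t₀ < t₁) (n r m : ℕ)
    (φ : ℝ → En n → En r → En n)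
    (φx : ℝ → En n → En r → (En n →L[ℝ] En n))
    (hφ : Continuous fun p : ℝ × En n × En r => φ p.1 p.2.1 p.2.2)
    (hφx : ∀ t x u, HasFDerivAt (fun y => φ t y u) (φx t x u) x)
    (hφxc : Continuous fun p : ℝ × En n × En r => φx p.1 p.2.1 p.2.2)
    (f₀ : En n → ℝ) (hf₀ : ContDiff ℝ 1 f₀)
    (g : En n → En m) (hg : ContDiff ℝ 1 g)
    (U : Set (En r)) (hUc : IsCompact U) (hUne : U.Nonempty)
    (x₀ : En n)
    (hne : ∃ x, Admissible t₀ t₁ φ U x₀ g x)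
    (K : ℝ) (hK : 0 < K)
    (hgrowth : ∀ t ∈ Icc t₀ t₁, ∀ x : En n, ∀ u ∈ U,
      |(inner ℝ x (φ t x u) : ℝ)| ≤ K * (‖x‖ ^ 2 + 1)) :
    -- there is a global infimum: a function in the closure (in `C([t₀,t₁],ℝⁿ)`)
    -- of the set of admissible trajectories minimizing `f₀(x(t₁))`
    ∃ xh : ℝ → En n, ContinuousOn xh (Icc t₀ t₁) ∧
      (∀ ε > 0, ∃ x, Admissible t₀ t₁ φ U x₀ g x ∧ ∀ t ∈ Icc t₀ t₁, ‖x t - xh t‖ < ε) ∧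
      ∀ x, Admissible t₀ t₁ φ U x₀ g x → f₀ (xh t₁) ≤ f₀ (x t₁) := by
  set R : ℝ := Real.sqrt ((‖x₀‖ ^ 2 + 1) * Real.exp (2 * K * (t₁ - t₀))) with hRdef
  obtain ⟨D₁, hD₁⟩ :=
    ((isCompact_Icc (a := t₀) (b := t₁)).prod
      ((isCompact_closedBall (0 : En n) R).prod hUc)).exists_bound_of_continuousOn
    hφ.continuousOn
  set D : ℝ := max D₁ 0 with hDdef
  have hD : ∀ t ∈ Icc t₀ t₁, ∀ y : En n, ‖y‖ ≤ R → ∀ v ∈ U, ‖φ t y v‖ ≤ D := by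
    intro t htm y hy v hv
    refine le_trans (hD₁ (t, y, v) ⟨htm, ?_, hv⟩) (le_max_left _ _)
    simpa [Metric.mem_closedBall, dist_eq_norm] using hy
  have key : ∀ x, Admissible t₀ t₁ φ U x₀ g x →
      ContinuousOn x (Icc t₀ t₁) ∧ (∀ t ∈ Icc t₀ t₁, ‖x t‖ ≤ R) ∧
      (∀ s ∈ Icc t₀ t₁, ∀ t ∈ Icc t₀ t₁, ‖x t - x s‖ ≤ D * |t - s|) := by
    rintro x ⟨u, hu, hxeq, -⟩
    exact key_estimates ht.le hφ hUc hUne hK hgrowth hRdef hD x u hu hxeq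
  haveI : CompactSpace (Icc t₀ t₁) := isCompact_iff_compactSpace.1 isCompact_Icc
  set A : Set (BoundedContinuousFunction (↥(Icc t₀ t₁)) (En n)) :=
    {f | ∃ x, Admissible t₀ t₁ φ U x₀ g x ∧ ∀ t : Icc t₀ t₁, f t = x t} with hAdef
  have hAin : ∀ f ∈ A, ∀ t : Icc t₀ t₁, f t ∈ Metric.closedBall (0 : En n) R := by
    rintro f ⟨x, hx, hfx⟩ t
    rw [Metric.mem_closedBall, dist_eq_norm, sub_zero, hfx t]
    exact (key x hx).2.1 t t.2
  have hAequi : Equicontinuous ((↑) : A → Icc t₀ t₁ → En n) := by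
    refine Metric.equicontinuous_of_continuity_modulus (fun d => D * d) ?_ _ ?_
    · have h1 : Tendsto (fun d : ℝ => D * d) (𝓝 0) (𝓝 (D * 0)) := tendsto_id.const_mul D
      simpa using h1
    · rintro s t ⟨f, x, hx, hfx⟩
      simp only []
      rw [hfx s, hfx t, dist_eq_norm]
      have h1 := (key x hx).2.2 t t.2 s s.2
      have h2 : dist s t = |(s : ℝ) - (t : ℝ)| := by rw [Subtype.dist_eq, Real.dist_eq]
      rw [h2]
      exact h1
  obtain ⟨x₁, hx₁⟩ := hne
  have hAne : A.Nonempty := by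
    refine ⟨BoundedContinuousFunction.mkOfCompact
      ⟨fun t : Icc t₀ t₁ => x₁ t, ?_⟩, x₁, hx₁, fun t => rfl⟩
    exact continuousOn_iff_continuous_restrict.1 (key x₁ hx₁).1
  have hclos : IsCompact (closure A) :=
    BoundedContinuousFunction.arzela_ascoli (Metric.closedBall 0 R)
      (isCompact_closedBall _ _) A (fun f t hf => hAin f hf t) hAequi
  set t₁' : Icc t₀ t₁ := ⟨t₁, right_mem_Icc.2 ht.le⟩ with ht₁'
  have hJc : Continuous fun f : BoundedContinuousFunction (↥(Icc t₀ t₁)) (En n) => f₀ (f t₁') :=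
    hf₀.continuous.comp (continuous_eval_const t₁')
  obtain ⟨fh, hfhmem, hfhmin⟩ := hclos.exists_isMinOn hAne.closure hJc.continuousOn
  refine ⟨fun t => fh (projIcc t₀ t₁ ht.le t), ?_, ?_, ?_⟩
  · exact (fh.continuous.comp continuous_projIcc).continuousOn
  · intro ε hε
    obtain ⟨f, hfA, hdist⟩ := Metric.mem_closure_iff.1 hfhmem ε hε
    obtain ⟨x, hx, hfx⟩ := hfA
    refine ⟨x, hx, ?_⟩
    intro t htm
    have h1 : projIcc t₀ t₁ ht.le t = ⟨t, htm⟩ := projIcc_of_mem ht.le htm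
    have h4 : x t = f ⟨t, htm⟩ := (hfx ⟨t, htm⟩).symm
    simp only [h1, h4]
    calc ‖f ⟨t, htm⟩ - fh ⟨t, htm⟩‖ = dist (f ⟨t, htm⟩) (fh ⟨t, htm⟩) := (dist_eq_norm _ _).symm
      _ ≤ dist f fh := BoundedContinuousFunction.dist_coe_le_dist _
      _ = dist fh f := dist_comm _ _
      _ < ε := hdist
  · intro x hx
    have hfxA : (BoundedContinuousFunction.mkOfCompact
        ⟨fun t : Icc t₀ t₁ => x t, continuousOn_iff_continuous_restrict.1 (key x hx).1⟩) ∈ A :=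
      ⟨x, hx, fun t => rfl⟩
    have h2 := hfhmin (subset_closure hfxA)
    have h3 : projIcc t₀ t₁ ht.le t₁ = t₁' := projIcc_of_mem ht.le t₁'.2
    simp only [h3]
    exact h2
end
end

section
/- (Generalized implicit function theorem.) Let X and Y be Banach spaces, Σ a topological space, σ̂ ∈ Σ, V a neighborhood of a point x̂ ∈ X, Q a convex closed subset of X, F̂ ∈ C¹ₓ((V∩Q)×Σ, Y) with F̂(x̂,σ̂) = 0, and suppose the partial derivative F̂ₓ(x̂,σ̂): X → Y is an invertible continuous linear operator. Then there exist neighborhoods V₀′ ⊆ V₀ ⊆ V of x̂, a neighborhood U₀ of σ̂, and a neighborhood W₀ of F̂ in the norm of C¹ₓ((V∩Q)×Σ, Y) such that: for every F ∈ W₀ satisfying x − F̂ₓ(x̂,σ̂)⁻¹ F(x,σ) ∈ Q for all (x,σ) ∈ (V₀′∩Q)×U₀, there exists a continuous map g_F: U₀ → V₀∩Q with F(g_F(σ),σ) = 0 and ‖g_F(σ) − x‖_X ≤ 2‖F̂ₓ(x̂,σ̂)⁻¹‖·‖F(x,σ)‖_Y for all (x,σ) ∈ (V₀′∩Q)×U₀;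 moreover, if F(x,σ) = 0 with x ∈ V₀∩Q and σ ∈ U₀, then x = g_F(σ). -/
open Set Filter Topology

set_option maxHeartbeats 1000000 in
/-- **Generalized implicit function theorem.**
`F̂ : X × Σ → Y` belongs to `C¹ₓ((V∩Q)×Σ, Y)`: it is continuous, has a continuous
partial derivative `F̂ₓ` in `x`, and the norm
`sup ‖F̂(x,σ)‖ + sup ‖F̂ₓ(x,σ)‖` over `(V∩Q)×Σ` is finite.  A neighborhood of `F̂`
in this norm is given by a radius `δ`: `F ∈ W₀` iff
`sup ‖F−F̂‖ + sup ‖Fₓ−F̂ₓ‖ < δ` over `(V∩Q)×Σ`. -/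
theorem generalized_implicit_function_theorem
    {X Y : Type*} [NormedAddCommGroup X] [NormedSpace ℝ X] [CompleteSpace X]
    [NormedAddCommGroup Y] [NormedSpace ℝ Y] [CompleteSpace Y]
    {S : Type*} [TopologicalSpace S] (sh : S)
    (xh : X) (V : Set X) (hV : V ∈ 𝓝 xh)
    (Q : Set X) (hQconv : Convex ℝ Q) (hQcl : IsClosed Q) (hxhQ : xh ∈ Q)
    (Fh : X → S → Y) (Fhx : X → S → (X →L[ℝ] Y))
    (hFhc : Continuous fun p : X × S => Fh p.1 p.2)
    (hFhd : ∀ x σ, HasFDerivAt (fun y => Fh y σ) (Fhx x σ) x)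
    (hFhxc : Continuous fun p : X × S => Fhx p.1 p.2)
    (hFhbdd : ∃ C : ℝ, ∀ x ∈ V ∩ Q, ∀ σ : S, ‖Fh x σ‖ + ‖Fhx x σ‖ ≤ C)
    (hFh0 : Fh xh sh = 0)
    (e : X ≃L[ℝ] Y) (he : (e : X →L[ℝ] Y) = Fhx xh sh) :
    ∃ (V₀' V₀ : Set X) (U₀ : Set S) (δ : ℝ),
      V₀' ⊆ V₀ ∧ V₀ ⊆ V ∧ V₀' ∈ 𝓝 xh ∧ V₀ ∈ 𝓝 xh ∧ U₀ ∈ 𝓝 sh ∧ 0 < δ ∧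
      ∀ (F : X → S → Y) (Fx : X → S → (X →L[ℝ] Y)),
        Continuous (fun p : X × S => F p.1 p.2) →
        (∀ x σ, HasFDerivAt (fun y => F y σ) (Fx x σ) x) →
        Continuous (fun p : X × S => Fx p.1 p.2) →
        -- `F ∈ W₀`, a `C¹ₓ`-ball around `F̂` of radius `δ`
        (∃ a b : ℝ, (∀ x ∈ V ∩ Q, ∀ σ : S, ‖F x σ - Fh x σ‖ ≤ a) ∧
          (∀ x ∈ V ∩ Q, ∀ σ : S, ‖Fx x σ - Fhx x σ‖ ≤ b) ∧ a + b < δ) →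
        -- tangency condition `x − F̂ₓ(x̂,σ̂)⁻¹ F(x,σ) ∈ Q`
        (∀ x ∈ V₀' ∩ Q, ∀ σ ∈ U₀, x - e.symm (F x σ) ∈ Q) →
        ∃ g : S → X, ContinuousOn g U₀ ∧ (∀ σ ∈ U₀, g σ ∈ V₀ ∩ Q) ∧
          (∀ σ ∈ U₀, F (g σ) σ = 0) ∧
          (∀ x ∈ V₀' ∩ Q, ∀ σ ∈ U₀,
            ‖g σ - x‖ ≤ 2 * ‖(e.symm : Y →L[ℝ] X)‖ * ‖F x σ‖) ∧
          (∀ x ∈ V₀ ∩ Q, ∀ σ ∈ U₀, F x σ = 0 → x = g σ) := by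
  classical
  set T : Y →L[ℝ] X := (e.symm : Y →L[ℝ] X) with hTdef
  set K : ℝ := ‖T‖ + 1 with hKdef
  have hK0 : (0:ℝ) < K := by positivity
  have hTK : ‖T‖ ≤ K := le_add_of_nonneg_right zero_le_one
  -- derivative closeness near (xh, sh)
  have hcont : ContinuousAt (fun p : X × S => ‖Fhx p.1 p.2 - (e : X →L[ℝ] Y)‖) (xh, sh) :=
    ((hFhxc.sub continuous_const).norm).continuousAt
  have hval : ‖Fhx xh sh - (e : X →L[ℝ] Y)‖ < 1/(4*K) := by
    rw [he]
    simpa using (by positivity : (0:ℝ) < 1/(4*K))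
  have h1 : {p : X × S | ‖Fhx p.1 p.2 - (e : X →L[ℝ] Y)‖ < 1/(4*K)} ∈ 𝓝 (xh, sh) :=
    hcont (Iio_mem_nhds hval)
  rw [nhds_prod_eq, Filter.mem_prod_iff] at h1
  obtain ⟨A, hA, B, hB, hAB⟩ := h1
  obtain ⟨r, hr0, hrball⟩ :=
    Metric.nhds_basis_closedBall.mem_iff.mp (Filter.inter_mem hA hV)
  -- value closeness at xh
  have hcont2 : ContinuousAt (fun σ : S => ‖Fh xh σ‖) sh :=
    ((hFhc.comp (Continuous.prodMk_right xh)).norm).continuousAt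
  have hval2 : ‖Fh xh sh‖ < r/(4*K) := by
    rw [hFh0]; simpa using (by positivity : (0:ℝ) < r/(4*K))
  have h2 : {σ : S | ‖Fh xh σ‖ < r/(4*K)} ∈ 𝓝 sh := hcont2 (Iio_mem_nhds hval2)
  set U₀ : Set S := B ∩ {σ : S | ‖Fh xh σ‖ < r/(4*K)} with hU₀def
  set D : Set X := Metric.closedBall xh r ∩ Q with hDdef
  set δ : ℝ := min r 1 / (4*K) with hδdef
  have hδ0 : 0 < δ := by
    have : 0 < min r 1 := lt_min hr0 one_pos
    positivity
  have hδr : δ ≤ r/(4*K) := by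
    apply div_le_div_of_nonneg_right (min_le_left _ _) ?_ |>.trans_eq rfl
    · positivity
  have hδ1 : δ ≤ 1/(4*K) := by
    apply div_le_div_of_nonneg_right (min_le_right _ _) ?_ |>.trans_eq rfl
    · positivity
  have hDV : ∀ x ∈ D, x ∈ V ∩ Q := fun x hx => ⟨(hrball hx.1).2, hx.2⟩
  have hDA : ∀ x ∈ D, x ∈ A := fun x hx => (hrball hx.1).1
  have hxhD : xh ∈ D := ⟨Metric.mem_closedBall_self hr0.le, hxhQ⟩
  have hDconv : Convex ℝ D := (convex_closedBall xh r).inter hQconv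
  have hDclosed : IsClosed D := Metric.isClosed_closedBall.inter hQcl
  have hDne : D.Nonempty := ⟨xh, hxhD⟩
  have hTe : T.comp (e : X →L[ℝ] Y) = ContinuousLinearMap.id ℝ X := by
    ext v; simp [hTdef]
  refine ⟨Metric.closedBall xh r, Metric.closedBall xh r, U₀, δ, subset_rfl,
    fun x hx => (hrball hx).2, Metric.closedBall_mem_nhds xh hr0,
    Metric.closedBall_mem_nhds xh hr0, Filter.inter_mem hB h2, hδ0, ?_⟩
  intro F Fx hFc hFd hFxc hW htang
  obtain ⟨a, b, ha, hb, hab⟩ := hW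
  have hxhVQ : xh ∈ V ∩ Q := ⟨mem_of_mem_nhds hV, hxhQ⟩
  have ha0 : 0 ≤ a := le_trans (norm_nonneg _) (ha xh hxhVQ sh)
  have hb0 : 0 ≤ b := le_trans (norm_nonneg _) (hb xh hxhVQ sh)
  have haδ : a < δ := by linarith
  have hbδ : b < δ := by linarith
  -- the Newton map
  set Φ : S → X → X := fun σ x => x - T (F x σ) with hΦdef
  -- its Lipschitz bound on D
  have lip : ∀ σ ∈ U₀, ∀ x ∈ D, ∀ y ∈ D, ‖Φ σ y - Φ σ x‖ ≤ (1/2) * ‖y - x‖ := by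
    intro σ hσ x hx y hy
    have hder : ∀ z ∈ D, HasFDerivWithinAt (Φ σ)
        (ContinuousLinearMap.id ℝ X - T.comp (Fx z σ)) D z := by
      intro z hz
      have hc : HasFDerivAt (fun y : X => T (F y σ)) (T.comp (Fx z σ)) z :=
        T.hasFDerivAt.comp z (hFd z σ)
      exact ((hasFDerivAt_id z).sub hc).hasFDerivWithinAt
    have hbound : ∀ z ∈ D, ‖ContinuousLinearMap.id ℝ X - T.comp (Fx z σ)‖ ≤ 1/2 := by
      intro z hz
      have heq : ContinuousLinearMap.id ℝ X - T.comp (Fx z σ)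
          = T.comp ((e : X →L[ℝ] Y) - Fx z σ) := by
        rw [ContinuousLinearMap.comp_sub, hTe]
      rw [heq]
      have h1' : ‖Fhx z σ - (e : X →L[ℝ] Y)‖ < 1/(4*K) := hAB (Set.mk_mem_prod (hDA z hz) hσ.1)
      have h2' : ‖Fx z σ - Fhx z σ‖ ≤ b := hb z (hDV z hz) σ
      have h3' : ‖(e : X →L[ℝ] Y) - Fx z σ‖ ≤ ‖(e : X →L[ℝ] Y) - Fhx z σ‖
          + ‖Fhx z σ - Fx z σ‖ := norm_sub_le_norm_sub_add_norm_sub _ _ _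
      have h1'' : ‖(e : X →L[ℝ] Y) - Fhx z σ‖ < 1/(4*K) := by
        rw [norm_sub_rev]; exact h1'
      have h2'' : ‖Fhx z σ - Fx z σ‖ ≤ b := by
        rw [norm_sub_rev]; exact h2'
      have h4' : ‖(e : X →L[ℝ] Y) - Fx z σ‖ ≤ 1/(2*K) := by
        have hb4 : b ≤ 1/(4*K) := le_trans hbδ.le hδ1
        have h14 : (1:ℝ)/(4*K) + 1/(4*K) = 1/(2*K) := by field_simp; ring
        linarith
      calc ‖T.comp ((e : X →L[ℝ] Y) - Fx z σ)‖
          ≤ ‖T‖ * ‖(e : X →L[ℝ] Y) - Fx z σ‖ := T.opNorm_comp_le _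
        _ ≤ K * (1/(2*K)) := by
            apply mul_le_mul hTK h4' (norm_nonneg _) hK0.le
        _ = 1/2 := by field_simp
    exact hDconv.norm_image_sub_le_of_norm_hasFDerivWithin_le hder hbound hx hy
  -- Φ σ maps D into D
  have hFxhσ : ∀ σ ∈ U₀, ‖F xh σ‖ ≤ r/(2*K) := by
    intro σ hσ
    have h1' : ‖Fh xh σ‖ < r/(4*K) := hσ.2
    have h2' : ‖F xh σ - Fh xh σ‖ ≤ a := ha xh hxhVQ σ
    have h3' : ‖F xh σ‖ ≤ ‖F xh σ - Fh xh σ‖ + ‖Fh xh σ‖ := by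
      have := norm_add_le (F xh σ - Fh xh σ) (Fh xh σ); simpa using this
    have haδ' : a ≤ r/(4*K) := le_trans haδ.le hδr
    have h14 : r/(4*K) + r/(4*K) = r/(2*K) := by field_simp; ring
    linarith
  have maps : ∀ σ ∈ U₀, ∀ x ∈ D, Φ σ x ∈ D := by
    intro σ hσ x hx
    constructor
    · rw [Metric.mem_closedBall, dist_eq_norm]
      have e1 : ‖Φ σ x - Φ σ xh‖ ≤ (1/2) * ‖x - xh‖ := lip σ hσ xh hxhD x hx
      have e2 : ‖x - xh‖ ≤ r := by
        rw [← dist_eq_norm]; exact hx.1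
      have e3 : ‖Φ σ xh - xh‖ ≤ r/2 := by
        have : Φ σ xh - xh = -(T (F xh σ)) := by simp [hΦdef]
        rw [this, norm_neg]
        calc ‖T (F xh σ)‖ ≤ ‖T‖ * ‖F xh σ‖ := T.le_opNorm _
          _ ≤ K * (r/(2*K)) := mul_le_mul hTK (hFxhσ σ hσ) (norm_nonneg _) hK0.le
          _ = r/2 := by field_simp
      calc ‖Φ σ x - xh‖ ≤ ‖Φ σ x - Φ σ xh‖ + ‖Φ σ xh - xh‖ := norm_sub_le_norm_sub_add_norm_sub _ _ _
        _ ≤ (1/2) * ‖x - xh‖ + r/2 := add_le_add e1 e3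
        _ ≤ (1/2) * r + r/2 := by linarith
        _ = r := by ring
    · have := htang x ⟨hx.1, hx.2⟩ σ hσ
      simpa [hΦdef, hTdef] using this
  -- fixed point existence
  haveI : Nonempty D := hDne.to_subtype
  haveI : CompleteSpace D := hDclosed.completeSpace_coe
  have hfix : ∀ σ ∈ U₀, ∃ x ∈ D, Φ σ x = x := by
    intro σ hσ
    set ψ : D → D := fun x => ⟨Φ σ x.1, maps σ hσ x.1 x.2⟩ with hψdef
    have hψ : ContractingWith (1/2 : NNReal) ψ := by
      constructor
      · exact NNReal.half_lt_self one_ne_zero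
      · apply LipschitzWith.of_dist_le_mul
        intro x y
        have := lip σ hσ y.1 y.2 x.1 x.2
        simp only [Subtype.dist_eq, dist_eq_norm, hψdef]
        simpa using this
    refine ⟨(ContractingWith.fixedPoint ψ hψ).1, (ContractingWith.fixedPoint ψ hψ).2, ?_⟩
    have := hψ.fixedPoint_isFixedPt
    exact congrArg Subtype.val this
  set g : S → X := fun σ => if h : σ ∈ U₀ then (hfix σ h).choose else xh with hgdef
  have hgD : ∀ σ ∈ U₀, g σ ∈ D := by
    intro σ hσ
    simp only [hgdef, dif_pos hσ]
    exact (hfix σ hσ).choose_spec.1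
  have hgfix : ∀ σ ∈ U₀, Φ σ (g σ) = g σ := by
    intro σ hσ
    simp only [hgdef, dif_pos hσ]
    exact (hfix σ hσ).choose_spec.2
  have hg0 : ∀ σ ∈ U₀, F (g σ) σ = 0 := by
    intro σ hσ
    have := hgfix σ hσ
    have hz : T (F (g σ) σ) = 0 := by
      have := sub_eq_self.mp this
      exact this
    have : e.symm (F (g σ) σ) = 0 := by simpa [hTdef] using hz
    exact (ContinuousLinearEquiv.map_eq_zero_iff e.symm).mp this
  -- estimate
  have hest : ∀ x ∈ D, ∀ σ ∈ U₀, ‖g σ - x‖ ≤ 2 * ‖T‖ * ‖F x σ‖ := by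
    intro x hx σ hσ
    have e1 : ‖g σ - Φ σ x‖ ≤ (1/2) * ‖g σ - x‖ := by
      have := lip σ hσ x hx (g σ) (hgD σ hσ)
      rwa [hgfix σ hσ] at this
    have e2 : ‖Φ σ x - x‖ ≤ ‖T‖ * ‖F x σ‖ := by
      have : Φ σ x - x = -(T (F x σ)) := by simp [hΦdef]
      rw [this, norm_neg]; exact T.le_opNorm _
    have e3 : ‖g σ - x‖ ≤ ‖g σ - Φ σ x‖ + ‖Φ σ x - x‖ := norm_sub_le_norm_sub_add_norm_sub _ _ _
    have hT0 : 0 ≤ ‖T‖ * ‖F x σ‖ := by positivity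
    linarith
  -- uniqueness
  have huniq : ∀ x ∈ D, ∀ σ ∈ U₀, F x σ = 0 → x = g σ := by
    intro x hx σ hσ hFx0
    have hfixx : Φ σ x = x := by simp [hΦdef, hFx0]
    have := lip σ hσ (g σ) (hgD σ hσ) x hx
    rw [hfixx, hgfix σ hσ] at this
    have : ‖x - g σ‖ ≤ 0 := by linarith
    have := le_antisymm this (norm_nonneg _)
    rwa [norm_sub_eq_zero_iff] at this
  -- continuity
  have hgc : ContinuousOn g U₀ := by
    intro σ' hσ'
    have hbound : ∀ σ ∈ U₀, dist (g σ) (g σ') ≤ 2 * ‖T‖ * ‖F (g σ') σ‖ := by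
      intro σ hσ
      rw [dist_eq_norm]
      exact hest (g σ') (hgD σ' hσ') σ hσ
    have hcF : Continuous fun σ : S => ‖F (g σ') σ‖ :=
      (hFc.comp (Continuous.prodMk_right (g σ'))).norm
    have htend : Tendsto (fun σ => 2 * ‖T‖ * ‖F (g σ') σ‖) (𝓝[U₀] σ') (𝓝 0) := by
      have h0 : (2 * ‖T‖ * ‖F (g σ') σ'‖ : ℝ) = 0 := by
        rw [hg0 σ' hσ']; simp
      have hm : Continuous fun σ : S => 2 * ‖T‖ * ‖F (g σ') σ‖ :=
        continuous_const.mul hcF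
      have := (hm.tendsto σ').mono_left (nhdsWithin_le_nhds (s := U₀))
      rwa [h0] at this
    have hdist : Tendsto (fun σ => dist (g σ) (g σ')) (𝓝[U₀] σ') (𝓝 0) := by
      apply squeeze_zero' (Filter.Eventually.of_forall fun σ => dist_nonneg)
        ?_ htend
      filter_upwards [self_mem_nhdsWithin] with σ hσ using hbound σ hσ
    exact tendsto_iff_dist_tendsto_zero.mpr hdist
  refine ⟨g, hgc, fun σ hσ => hgD σ hσ, hg0, ?_, ?_⟩
  · intro x hx σ hσ
    exact hest x ⟨hx.1, hx.2⟩ σ hσ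
  · intro x hx σ hσ hFx0
    exact huniq x ⟨hx.1, hx.2⟩ σ hσ hFx0
end

section
/- In the setting of the generalized implicit function theorem (X, Y Banach, Σ topological, σ̂ ∈ Σ, V a neighborhood of x̂, Q ⊆ X convex closed, F̂ ∈ C¹ₓ((V∩Q)×Σ, Y), F̂(x̂,σ̂)=0, F̂ₓ(x̂,σ̂) invertible, with neighborhoods V₀′ ⊆ V₀ ⊆ V, U₀, W₀ from its conclusion), suppose both F̂ and some F ∈ W₀ satisfy the tangency condition: x − F̂ₓ(x̂,σ̂)⁻¹ F̂(x,σ) ∈ Q and x − F̂ₓ(x̂,σ̂)⁻¹ F(x,σ) ∈ Q for all (x,σ) ∈ (V₀′∩Q)×U₀. Then there exist continuous maps g_F: U₀ → V₀∩Q and g_F̂: U₀ → V₀∩Q with F(g_F(σ),σ) = 0 and F̂(g_F̂(σ),σ) = 0 for all σ ∈ U₀, and there is a neighborhood U₀′ ⊆ U₀ of σ̂ such that sup_{σ∈U₀′} ‖g_F(σ) − g_F̂(σ)‖_X ≤ 2‖F̂ₓ(x̂,σ̂)⁻¹‖ · sup_{(x,σ)∈(V∩Q)×Σ} ‖F(x,σ)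 − F̂(x,σ)‖_Y. Moreover F(x,σ)=0 (resp. F̂(x,σ)=0) with x ∈ V₀∩Q, σ ∈ U₀ forces x = g_F(σ) (resp. x = g_F̂(σ)). -/
open Set Filter Topology

section AuxImplicit
open Metric

lemma aux_fixed {X Y S : Type*} [NormedAddCommGroup X] [NormedSpace ℝ X] [CompleteSpace X]
    [NormedAddCommGroup Y] [NormedSpace ℝ Y] [TopologicalSpace S]
    (T : Y →L[ℝ] X) (hTinj : ∀ y, T y = 0 → y = 0)
    (G : X → S → Y) (hGc : Continuous fun p : X × S => G p.1 p.2)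
    (s : Set X) (hscl : IsClosed s) (x0 : X) (hx0 : x0 ∈ s)
    (U : Set S) (K : ℝ) (hK0 : 0 ≤ K) (hK1 : K < 1)
    (hmaps : ∀ x ∈ s, ∀ σ ∈ U, x - T (G x σ) ∈ s)
    (hlip : ∀ x ∈ s, ∀ x' ∈ s, ∀ σ ∈ U,
      ‖(x - T (G x σ)) - (x' - T (G x' σ))‖ ≤ K * ‖x - x'‖) :
    ∃ g : S → X, ContinuousOn g U ∧ (∀ σ ∈ U, g σ ∈ s) ∧
      (∀ σ ∈ U, G (g σ) σ = 0) ∧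
      (∀ x ∈ s, ∀ σ ∈ U, G x σ = 0 → x = g σ) ∧
      (∀ σ ∈ U, ∀ x ∈ s, ‖g σ - x‖ ≤ (1 - K)⁻¹ * ‖T (G x σ)‖) := by
  -- existence of a zero in `s` for each `σ ∈ U`
  have hex : ∀ σ ∈ U, ∃ x ∈ s, G x σ = 0 := by
    intro σ hσ
    set f : X → X := fun x => x - T (G x σ) with hf
    have hsf : MapsTo f s s := fun x hx => hmaps x hx σ hσ
    have hK0' : (K.toNNReal : ℝ) = K := Real.coe_toNNReal K hK0
    have hcw : ContractingWith K.toNNReal (hsf.restrict f s s) := by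
      constructor
      · exact_mod_cast (by rwa [hK0'] : (K.toNNReal : ℝ) < 1)
      · apply LipschitzWith.of_dist_le_mul
        rintro ⟨x, hx⟩ ⟨x', hx'⟩
        simp only [Subtype.dist_eq, MapsTo.val_restrict_apply, dist_eq_norm, hK0']
        exact hlip x hx x' hx' σ hσ
    obtain ⟨y, hys, hy, -⟩ := ContractingWith.exists_fixedPoint' hscl.isComplete hsf hcw hx0
      (edist_ne_top _ _)
    refine ⟨y, hys, hTinj _ ?_⟩
    have : y - T (G y σ) = y := hy
    have := sub_eq_self.mp this
    exact this
  have hall : ∀ σ : S, ∃ x, x ∈ s ∧ (σ ∈ U → G x σ = 0) := by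
    intro σ
    by_cases hσ : σ ∈ U
    · obtain ⟨x, hx, hx0⟩ := hex σ hσ
      exact ⟨x, hx, fun _ => hx0⟩
    · exact ⟨x0, hx0, fun h => absurd h hσ⟩
  choose g hgs hgz using hall
  have hK1' : (0:ℝ) < 1 - K := by linarith
  -- key estimate
  have est : ∀ σ ∈ U, ∀ x ∈ s, ‖g σ - x‖ ≤ (1 - K)⁻¹ * ‖T (G x σ)‖ := by
    intro σ hσ x hx
    have h1 := hlip (g σ) (hgs σ) x hx σ hσ
    rw [hgz σ hσ, map_zero, sub_zero] at h1
    have h2 : ‖g σ - x‖ ≤ K * ‖g σ - x‖ + ‖T (G x σ)‖ := by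
      calc ‖g σ - x‖ = ‖(g σ - (x - T (G x σ))) + (- T (G x σ))‖ := by congr 1; abel
        _ ≤ ‖g σ - (x - T (G x σ))‖ + ‖- T (G x σ)‖ := norm_add_le _ _
        _ ≤ K * ‖g σ - x‖ + ‖T (G x σ)‖ := by rw [norm_neg]; exact add_le_add h1 le_rfl
    rw [le_inv_mul_iff₀ hK1']
    nlinarith [norm_nonneg (g σ - x), norm_nonneg (T (G x σ))]
  -- uniqueness
  have uniq : ∀ x ∈ s, ∀ σ ∈ U, G x σ = 0 → x = g σ := by
    intro x hx σ hσ hx0'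
    have h1 := hlip x hx (g σ) (hgs σ) σ hσ
    simp only [hgz σ hσ, hx0', map_zero, sub_zero] at h1
    have h3 : ‖x - g σ‖ = 0 := by nlinarith [norm_nonneg (x - g σ)]
    exact sub_eq_zero.mp (norm_eq_zero.mp h3)
  -- continuity
  have cont : ContinuousOn g U := by
    intro σ₀ hσ₀
    rw [ContinuousWithinAt, tendsto_iff_norm_sub_tendsto_zero]
    have hb : ∀ σ ∈ U, ‖g σ - g σ₀‖ ≤ (1 - K)⁻¹ * ‖T (G (g σ₀) σ)‖ :=
      fun σ hσ => est σ hσ (g σ₀) (hgs σ₀)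
    apply squeeze_zero' (Eventually.of_forall fun σ => norm_nonneg _)
      (eventually_nhdsWithin_of_forall hb)
    have hc : Continuous fun σ => (1 - K)⁻¹ * ‖T (G (g σ₀) σ)‖ := by
      exact continuous_const.mul ((T.continuous.comp
        (hGc.comp (continuous_const.prodMk continuous_id))).norm)
    have h5 : Tendsto (fun σ => (1 - K)⁻¹ * ‖T (G (g σ₀) σ)‖) (𝓝[U] σ₀)
        (𝓝 ((1 - K)⁻¹ * ‖T (G (g σ₀) σ₀)‖)) :=
      (hc.tendsto σ₀).mono_left nhdsWithin_le_nhds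
    simpa [hgz σ₀ hσ₀] using h5
  exact ⟨g, cont, fun σ _ => hgs σ, hgz, uniq, est⟩

end AuxImplicit

set_option maxHeartbeats 4000000 in
/-- **Corollary to the generalized implicit function theorem.**
If both `F̂` and `F ∈ W₀` satisfy the tangency condition, then both implicit
functions `g_F, g_F̂ : U₀ → V₀ ∩ Q` exist, and on a smaller neighborhood `U₀'`
of `σ̂` one has `‖g_F − g_F̂‖_{C(U₀',X)} ≤ 2‖F̂ₓ(x̂,σ̂)⁻¹‖ ‖F − F̂‖_{C((V∩Q)×Σ,Y)}`. -/
theorem generalized_implicit_function_corollary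
    {X Y : Type*} [NormedAddCommGroup X] [NormedSpace ℝ X] [CompleteSpace X]
    [NormedAddCommGroup Y] [NormedSpace ℝ Y] [CompleteSpace Y]
    {S : Type*} [TopologicalSpace S] (sh : S)
    (xh : X) (V : Set X) (hV : V ∈ 𝓝 xh)
    (Q : Set X) (hQconv : Convex ℝ Q) (hQcl : IsClosed Q) (hxhQ : xh ∈ Q)
    (Fh : X → S → Y) (Fhx : X → S → (X →L[ℝ] Y))
    (hFhc : Continuous fun p : X × S => Fh p.1 p.2)
    (hFhd : ∀ x σ, HasFDerivAt (fun y => Fh y σ) (Fhx x σ) x)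
    (hFhxc : Continuous fun p : X × S => Fhx p.1 p.2)
    (hFhbdd : ∃ C : ℝ, ∀ x ∈ V ∩ Q, ∀ σ : S, ‖Fh x σ‖ + ‖Fhx x σ‖ ≤ C)
    (hFh0 : Fh xh sh = 0)
    (e : X ≃L[ℝ] Y) (he : (e : X →L[ℝ] Y) = Fhx xh sh) :
    ∃ (V₀' V₀ : Set X) (U₀ : Set S) (δ : ℝ),
      V₀' ⊆ V₀ ∧ V₀ ⊆ V ∧ V₀' ∈ 𝓝 xh ∧ V₀ ∈ 𝓝 xh ∧ U₀ ∈ 𝓝 sh ∧ 0 < δ ∧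
      ∀ (F : X → S → Y) (Fx : X → S → (X →L[ℝ] Y)),
        Continuous (fun p : X × S => F p.1 p.2) →
        (∀ x σ, HasFDerivAt (fun y => F y σ) (Fx x σ) x) →
        Continuous (fun p : X × S => Fx p.1 p.2) →
        -- `F ∈ W₀`, a `C¹ₓ`-ball around `F̂` of radius `δ`
        (∃ a b : ℝ, (∀ x ∈ V ∩ Q, ∀ σ : S, ‖F x σ - Fh x σ‖ ≤ a) ∧
          (∀ x ∈ V ∩ Q, ∀ σ : S, ‖Fx x σ - Fhx x σ‖ ≤ b) ∧ a + b < δ) →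
        -- tangency conditions for `F` and for `F̂`
        (∀ x ∈ V₀' ∩ Q, ∀ σ ∈ U₀, x - e.symm (F x σ) ∈ Q) →
        (∀ x ∈ V₀' ∩ Q, ∀ σ ∈ U₀, x - e.symm (Fh x σ) ∈ Q) →
        ∃ gF gFh : S → X,
          ContinuousOn gF U₀ ∧ ContinuousOn gFh U₀ ∧
          (∀ σ ∈ U₀, gF σ ∈ V₀ ∩ Q) ∧ (∀ σ ∈ U₀, gFh σ ∈ V₀ ∩ Q) ∧
          (∀ σ ∈ U₀, F (gF σ) σ = 0) ∧ (∀ σ ∈ U₀, Fh (gFh σ) σ = 0) ∧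
          (∃ U₀' ∈ 𝓝 sh, U₀' ⊆ U₀ ∧
            ∀ c : ℝ, (∀ x ∈ V ∩ Q, ∀ σ : S, ‖F x σ - Fh x σ‖ ≤ c) →
              ∀ σ ∈ U₀', ‖gF σ - gFh σ‖ ≤ 2 * ‖(e.symm : Y →L[ℝ] X)‖ * c) ∧
          (∀ x ∈ V₀ ∩ Q, ∀ σ ∈ U₀, F x σ = 0 → x = gF σ) ∧
          (∀ x ∈ V₀ ∩ Q, ∀ σ ∈ U₀, Fh x σ = 0 → x = gFh σ) := by
  classical
  set A : X →L[ℝ] Y := Fhx xh sh with hA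
  set T : Y →L[ℝ] X := (e.symm : Y →L[ℝ] X) with hT
  have hTapp : ∀ y : Y, T y = e.symm y := fun y => rfl
  have hTA : ∀ v : X, T (A v) = v := by
    intro v; rw [← he]; exact e.symm_apply_apply v
  have hTinj : ∀ y, T y = 0 → y = 0 := by
    intro y hy
    have : e.symm y = e.symm 0 := by rw [map_zero]; exact hy
    exact e.symm.injective this
  set L0 : ℝ := ‖T‖ + 1 with hL0def
  have hL0 : 0 < L0 := by positivity
  have hLle : ‖T‖ ≤ L0 := by simp [hL0def]
  set ε : ℝ := 1 / (8 * L0) with hεdef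
  have hε : 0 < ε := by positivity
  -- neighborhood where `‖Fhx - A‖ < ε`
  have hW : {p : X × S | ‖Fhx p.1 p.2 - A‖ < ε} ∈ 𝓝 (xh, sh) := by
    have : ContinuousAt (fun p : X × S => ‖Fhx p.1 p.2 - A‖) (xh, sh) :=
      ((hFhxc.sub continuous_const).norm).continuousAt
    have h0 : ‖Fhx (xh, sh).1 (xh, sh).2 - A‖ < ε := by simp [hA, hε]
    exact this.eventually_lt continuousAt_const h0
  obtain ⟨Vx, hVx, U₁, hU₁, hVxU₁⟩ := mem_nhds_prod_iff.mp hW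
  have hVU : ∀ x ∈ Vx, ∀ σ ∈ U₁, ‖Fhx x σ - A‖ < ε := fun x hx σ hσ =>
    hVxU₁ (Set.mk_mem_prod hx hσ)
  -- radius r₁
  obtain ⟨ρ, hρ, hρsub⟩ := Metric.mem_nhds_iff.mp (inter_mem hVx hV)
  set r₁ : ℝ := ρ / 2 with hr₁def
  have hr₁ : 0 < r₁ := by positivity
  have hball : Metric.closedBall xh r₁ ⊆ Vx ∩ V :=
    (Metric.closedBall_subset_ball (by linarith)).trans hρsub
  set δ : ℝ := min (1 / (8 * L0)) (r₁ / (4 * L0)) with hδdef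
  have hδ : 0 < δ := lt_min (by positivity) (by positivity)
  have hδ1 : δ ≤ 1 / (8 * L0) := min_le_left _ _
  have hδ2 : δ ≤ r₁ / (4 * L0) := min_le_right _ _
  set U₂ : Set S := {σ | ‖Fh xh σ‖ < δ} with hU₂def
  have hU₂ : U₂ ∈ 𝓝 sh := by
    have hc : Continuous fun σ => ‖Fh xh σ‖ :=
      (hFhc.comp (continuous_const.prodMk continuous_id)).norm
    have : IsOpen U₂ := isOpen_lt hc continuous_const
    exact this.mem_nhds (by simp [hU₂def, hFh0, hδ])
  set U₀ : Set S := U₁ ∩ U₂ with hU₀def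
  have hU₀ : U₀ ∈ 𝓝 sh := inter_mem hU₁ hU₂
  set s : Set X := Metric.closedBall xh r₁ ∩ Q with hsdef
  have hscl : IsClosed s := Metric.isClosed_closedBall.inter hQcl
  have hsconv : Convex ℝ s := (convex_closedBall xh r₁).inter hQconv
  have hxs : xh ∈ s := ⟨Metric.mem_closedBall_self hr₁.le, hxhQ⟩
  have hsub : s ⊆ V ∩ Q := fun x hx => ⟨(hball hx.1).2, hx.2⟩
  have hxhVQ : xh ∈ V ∩ Q := ⟨mem_of_mem_nhds hV, hxhQ⟩
  have hU₂fact : ∀ σ ∈ U₀, ‖Fh xh σ‖ ≤ δ := fun σ hσ => le_of_lt hσ.2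
  have hU₁fact : ∀ σ ∈ U₀, σ ∈ U₁ := fun σ hσ => hσ.1
  clear_value A T L0 ε δ U₂
  clear hU₂def
  refine ⟨Metric.closedBall xh r₁, Metric.closedBall xh r₁, U₀, δ, subset_rfl,
    fun x hx => (hball hx).2, Metric.closedBall_mem_nhds xh hr₁,
    Metric.closedBall_mem_nhds xh hr₁, hU₀, hδ, ?_⟩
  rintro F Fx hFc hFd hFxc ⟨a, b, ha, hb, hab⟩ htF htFh
  have ha0 : 0 ≤ a := le_trans (norm_nonneg _) (ha xh hxhVQ sh)
  have hb0 : 0 ≤ b := le_trans (norm_nonneg _) (hb xh hxhVQ sh)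
  -- the main construction, applied both to `F` and to `F̂`
  have key : ∀ (G : X → S → Y) (Gx : X → S → (X →L[ℝ] Y)),
      (Continuous fun p : X × S => G p.1 p.2) →
      (∀ x σ, HasFDerivAt (fun y => G y σ) (Gx x σ) x) →
      ∀ a' b' : ℝ, 0 ≤ a' → 0 ≤ b' → a' + b' < δ →
      (∀ x ∈ V ∩ Q, ∀ σ : S, ‖G x σ - Fh x σ‖ ≤ a') →
      (∀ x ∈ V ∩ Q, ∀ σ : S, ‖Gx x σ - Fhx x σ‖ ≤ b') →
      (∀ x ∈ s, ∀ σ ∈ U₀, x - T (G x σ) ∈ Q) →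
      ∃ g : S → X, ContinuousOn g U₀ ∧ (∀ σ ∈ U₀, g σ ∈ s) ∧
        (∀ σ ∈ U₀, G (g σ) σ = 0) ∧
        (∀ x ∈ s, ∀ σ ∈ U₀, G x σ = 0 → x = g σ) ∧
        (∀ σ ∈ U₀, ∀ x ∈ s, ‖g σ - x‖ ≤ (1 - (1/4 : ℝ))⁻¹ * ‖T (G x σ)‖) := by
    intro G Gx hGc hGd a' b' ha'0 hb'0 hab' ha' hb' htan
    have ha'δ : a' < δ := by linarith
    have hb'δ : b' < δ := by linarith
    -- Lipschitz estimate
    have hlip : ∀ x ∈ s, ∀ x' ∈ s, ∀ σ ∈ U₀,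
        ‖(x - T (G x σ)) - (x' - T (G x' σ))‖ ≤ (1/4 : ℝ) * ‖x - x'‖ := by
      intro x hx x' hx' σ hσ
      have hTA' : T.comp A = ContinuousLinearMap.id ℝ X := by
        ext v; simpa using hTA v
      have bound : ∀ y ∈ s, ‖ContinuousLinearMap.id ℝ X - T.comp (Gx y σ)‖ ≤ (1/4 : ℝ) := by
        intro y hy
        have h1 : ContinuousLinearMap.id ℝ X - T.comp (Gx y σ) = T.comp (A - Gx y σ) := by
          rw [ContinuousLinearMap.comp_sub, hTA']
        rw [h1]
        have h2 : ‖T.comp (A - Gx y σ)‖ ≤ ‖T‖ * ‖A - Gx y σ‖ :=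
          ContinuousLinearMap.opNorm_comp_le _ _
        have h3 : ‖A - Gx y σ‖ ≤ ‖A - Fhx y σ‖ + ‖Fhx y σ - Gx y σ‖ := by
          calc ‖A - Gx y σ‖ = ‖(A - Fhx y σ) + (Fhx y σ - Gx y σ)‖ := by congr 1; abel
            _ ≤ _ := norm_add_le _ _
        have h4 : ‖A - Fhx y σ‖ < ε := by
          rw [norm_sub_rev]
          exact hVU y (hball hy.1).1 σ (hU₁fact σ hσ)
        have h5 : ‖Fhx y σ - Gx y σ‖ ≤ b' := by
          rw [norm_sub_rev]; exact hb' y (hsub hy) σ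
        have h6 : ‖A - Gx y σ‖ ≤ ε + b' := by linarith
        calc ‖T.comp (A - Gx y σ)‖ ≤ ‖T‖ * ‖A - Gx y σ‖ := h2
          _ ≤ L0 * (ε + b') := by
              apply mul_le_mul hLle h6 (norm_nonneg _) hL0.le
          _ ≤ L0 * (1 / (8 * L0) + 1 / (8 * L0)) := by
              apply mul_le_mul_of_nonneg_left _ hL0.le
              have : b' ≤ 1 / (8 * L0) := le_trans hb'δ.le hδ1
              rw [hεdef]; linarith
          _ = 1/4 := by field_simp; ring
      have hder : ∀ y ∈ s, HasFDerivWithinAt (fun y => y - T (G y σ))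
          (ContinuousLinearMap.id ℝ X - T.comp (Gx y σ)) s y := by
        intro y hy
        exact ((hasFDerivAt_id y).sub ((T.hasFDerivAt).comp y (hGd y σ))).hasFDerivWithinAt
      have := hsconv.norm_image_sub_le_of_norm_hasFDerivWithin_le hder bound hx' hx
      simpa using this
    -- self-mapping
    have hmaps : ∀ x ∈ s, ∀ σ ∈ U₀, x - T (G x σ) ∈ s := by
      intro x hx σ hσ
      refine ⟨?_, htan x hx σ hσ⟩
      have h1 : ‖(x - T (G x σ)) - (xh - T (G xh σ))‖ ≤ (1/4 : ℝ) * ‖x - xh‖ :=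
        hlip x hx xh hxs σ hσ
      have h2 : ‖x - xh‖ ≤ r₁ := by
        rw [← dist_eq_norm]; exact hx.1
      have h3 : ‖G xh σ‖ ≤ a' + δ := by
        calc ‖G xh σ‖ = ‖(G xh σ - Fh xh σ) + Fh xh σ‖ := by congr 1; abel
          _ ≤ ‖G xh σ - Fh xh σ‖ + ‖Fh xh σ‖ := norm_add_le _ _
          _ ≤ a' + δ := add_le_add (ha' xh hxhVQ σ) (hU₂fact σ hσ)
      have h4 : ‖T (G xh σ)‖ ≤ L0 * (a' + δ) := by
        calc ‖T (G xh σ)‖ ≤ ‖T‖ * ‖G xh σ‖ := T.le_opNorm _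
          _ ≤ L0 * (a' + δ) := mul_le_mul hLle h3 (norm_nonneg _) hL0.le
      have h5 : L0 * (a' + δ) ≤ r₁ / 2 := by
        have hδ2' : L0 * δ ≤ r₁ / 4 := by
          have h := (le_div_iff₀ (by positivity : (0:ℝ) < 4 * L0)).mp hδ2
          have h' : δ * (4 * L0) = 4 * (L0 * δ) := by ring
          linarith
        have h6 := mul_le_mul_of_nonneg_left ha'δ.le hL0.le
        have h7 : L0 * (a' + δ) = L0 * a' + L0 * δ := by ring
        linarith
      rw [Metric.mem_closedBall, dist_eq_norm]
      calc ‖(x - T (G x σ)) - xh‖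
          = ‖((x - T (G x σ)) - (xh - T (G xh σ))) + (- T (G xh σ))‖ := by congr 1; abel
        _ ≤ ‖(x - T (G x σ)) - (xh - T (G xh σ))‖ + ‖T (G xh σ)‖ := by
            refine (norm_add_le _ _).trans ?_; rw [norm_neg]
        _ ≤ (1/4 : ℝ) * r₁ + r₁ / 2 := by
            have := h1.trans (by linarith : (1/4 : ℝ) * ‖x - xh‖ ≤ (1/4 : ℝ) * r₁)
            linarith [h4.trans h5]
        _ ≤ r₁ := by linarith
    exact aux_fixed T hTinj G hGc s hscl xh hxs U₀ (1/4) (by norm_num) (by norm_num) hmaps hlip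
  -- apply to F and Fh
  have htF' : ∀ x ∈ s, ∀ σ ∈ U₀, x - T (F x σ) ∈ Q := by
    intro x hx σ hσ
    simp only [hT, ContinuousLinearEquiv.coe_coe]
    exact htF x hx σ hσ
  have htFh' : ∀ x ∈ s, ∀ σ ∈ U₀, x - T (Fh x σ) ∈ Q := by
    intro x hx σ hσ
    simp only [hT, ContinuousLinearEquiv.coe_coe]
    exact htFh x hx σ hσ
  obtain ⟨gF, hgFc, hgFs, hgFz, hgFu, hgFe⟩ :=
    key F Fx hFc hFd a b ha0 hb0 hab ha hb htF'
  obtain ⟨gFh, hgFhc, hgFhs, hgFhz, hgFhu, -⟩ :=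
    key Fh Fhx hFhc hFhd 0 0 le_rfl le_rfl (by linarith) (by simp) (by simp) htFh'
  refine ⟨gF, gFh, hgFc, hgFhc, fun σ hσ => ⟨(hgFs σ hσ).1, (hgFs σ hσ).2⟩,
    fun σ hσ => ⟨(hgFhs σ hσ).1, (hgFhs σ hσ).2⟩, hgFz, hgFhz,
    ⟨U₀, hU₀, subset_rfl, ?_⟩, fun x hx σ hσ hx0 => hgFu x hx σ hσ hx0,
    fun x hx σ hσ hx0 => hgFhu x hx σ hσ hx0⟩
  intro c hc σ hσ
  have hc0 : 0 ≤ c := le_trans (norm_nonneg _) (hc xh hxhVQ sh)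
  have h1 := hgFe σ hσ (gFh σ) (hgFhs σ hσ)
  have h2 : ‖T (F (gFh σ) σ)‖ ≤ ‖T‖ * c := by
    have h3 : ‖F (gFh σ) σ‖ ≤ c := by
      have := hc (gFh σ) (hsub (hgFhs σ hσ)) σ
      rwa [hgFhz σ hσ, sub_zero] at this
    calc ‖T (F (gFh σ) σ)‖ ≤ ‖T‖ * ‖F (gFh σ) σ‖ := T.le_opNorm _
      _ ≤ ‖T‖ * c := mul_le_mul_of_nonneg_left h3 (norm_nonneg _)
  have hTc : 0 ≤ ‖T‖ * c := mul_nonneg (norm_nonneg _) hc0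
  calc ‖gF σ - gFh σ‖ ≤ (1 - (1/4 : ℝ))⁻¹ * ‖T (F (gFh σ) σ)‖ := h1
    _ ≤ (4/3 : ℝ) * (‖T‖ * c) := by
        norm_num
        linarith [h2]
    _ ≤ 2 * ‖T‖ * c := by
        have h8 : 2 * ‖T‖ * c = 2 * (‖T‖ * c) := by ring
        linarith
end

section
/- Let X and Y be Banach spaces, Λ: X → Y a continuous linear operator, C a convex closed subset of X, x₀ ∈ C, y₀ = Λx₀, and suppose y₀ ∈ int ΛC. Then there exist neighborhoods V₁ of x₀, U₁ of y₀, U₂ of 0 ∈ X, a constant a > 0, and a continuous map R: V₁ × U₁ × U₂ → X such that for every σ = (σ₁,σ₂) ∈ U₁ × U₂ and every ξ ∈ V₁: Λ R(ξ,σ) = σ₁, R(ξ,σ) ∈ σ₂ + C, and ‖R(ξ,σ) − ξ‖_X ≤ a(‖Λξ − σ₁‖_Y + dist(ξ − σ₂, C)), where dist(ξ − σ₂, C) is the distance from ξ − σ₂ to the set C. -/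
open Set Filter Topology Metric

lemma baire_bounded_cover {X Y : Type*} [NormedAddCommGroup X] [NormedSpace ℝ X]
    [NormedAddCommGroup Y] [NormedSpace ℝ Y] [CompleteSpace Y]
    (Λ : X →L[ℝ] Y) (C : Set X) (hCconv : Convex ℝ C)
    (x₀ : X) (hx₀ : x₀ ∈ C)
    (hint : Λ x₀ ∈ interior (Λ '' C)) :
    ∃ m : ℕ, ∃ ρ : ℝ, 0 < ρ ∧
      closedBall (Λ x₀) ρ ⊆ closure (Λ '' (C ∩ closedBall x₀ m)) := by
  set y₀ := Λ x₀ with hy₀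
  set U := interior (Λ '' C) with hUdef
  have hUopen : IsOpen U := isOpen_interior
  set D : ℕ → Set Y := fun n => closure (Λ '' (C ∩ closedBall x₀ n)) with hD
  -- cover of U
  have hcover : U ⊆ ⋃ n, D n := by
    intro y hy
    rcases interior_subset hy with ⟨c, hc, rfl⟩
    rcases exists_nat_ge ‖c - x₀‖ with ⟨n, hn⟩
    exact mem_iUnion.2 ⟨n, subset_closure ⟨c, ⟨hc, by
      simpa [dist_eq_norm] using hn⟩, rfl⟩⟩
  -- Baire: cover Y by closed sets D n ∪ Uᶜ
  have hdense : Dense (⋃ n : ℕ, interior (D n ∪ Uᶜ)) := by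
    apply dense_iUnion_interior_of_closed
    · exact fun n => (isClosed_closure).union (hUopen.isClosed_compl)
    · apply eq_univ_of_forall
      intro y
      by_cases hy : y ∈ U
      · rcases mem_iUnion.1 (hcover hy) with ⟨n, hn⟩
        exact mem_iUnion.2 ⟨n, Or.inl hn⟩
      · exact mem_iUnion.2 ⟨0, Or.inr hy⟩
  -- find a point y₁ ∈ U with a ball inside some D n
  have hy₀U : y₀ ∈ U := hint
  obtain ⟨y₁, hy₁mem, hy₁U⟩ : ∃ y₁, y₁ ∈ ⋃ n : ℕ, interior (D n ∪ Uᶜ) ∧ y₁ ∈ U := by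
    rcases hdense.exists_mem_open hUopen ⟨y₀, hy₀U⟩ with ⟨y₁, h1, h2⟩
    exact ⟨y₁, h1, h2⟩
  rcases mem_iUnion.1 hy₁mem with ⟨n, hy₁n⟩
  -- the open set interior (D n ∪ Uᶜ) ∩ U is inside D n
  have hsub : interior (D n ∪ Uᶜ) ∩ U ⊆ D n := by
    intro y ⟨h1, h2⟩
    rcases interior_subset h1 with h | h
    · exact h
    · exact absurd h2 h
  obtain ⟨ρ₁, hρ₁pos, hball₁⟩ : ∃ ρ₁ > 0, ball y₁ ρ₁ ⊆ D n := by
    have : IsOpen (interior (D n ∪ Uᶜ) ∩ U) := isOpen_interior.inter hUopen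
    rcases Metric.isOpen_iff.1 this y₁ ⟨hy₁n, hy₁U⟩ with ⟨ρ₁, h1, h2⟩
    exact ⟨ρ₁, h1, fun y hy => hsub (h2 hy)⟩
  -- transfer the ball to y₀
  obtain ⟨ρ₀, hρ₀pos, hball₀⟩ : ∃ ρ₀ > 0, ball y₀ ρ₀ ⊆ Λ '' C := by
    rcases Metric.isOpen_iff.1 hUopen y₀ hy₀U with ⟨ρ₀, h1, h2⟩
    exact ⟨ρ₀, h1, fun y hy => interior_subset (h2 hy)⟩
  set t : ℝ := min 1 (ρ₀ / (2 * ‖y₀ - y₁‖ + 1)) with ht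
  have htpos : 0 < t := by
    apply lt_min one_pos
    positivity
  have ht1 : t ≤ 1 := min_le_left _ _
  set y₂ : Y := y₀ + t • (y₀ - y₁) with hy₂def
  have hy₂mem : y₂ ∈ Λ '' C := by
    apply hball₀
    simp only [mem_ball, dist_eq_norm, hy₂def]
    have h1 : ‖y₀ + t • (y₀ - y₁) - y₀‖ = t * ‖y₀ - y₁‖ := by
      rw [add_sub_cancel_left, norm_smul, Real.norm_eq_abs, abs_of_pos htpos]
    rw [h1]
    have h2 : t ≤ ρ₀ / (2 * ‖y₀ - y₁‖ + 1) := min_le_right _ _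
    have h3 : t * ‖y₀ - y₁‖ ≤ ρ₀ / (2 * ‖y₀ - y₁‖ + 1) * ‖y₀ - y₁‖ :=
      mul_le_mul_of_nonneg_right h2 (norm_nonneg _)
    calc t * ‖y₀ - y₁‖ ≤ ρ₀ / (2 * ‖y₀ - y₁‖ + 1) * ‖y₀ - y₁‖ := h3
      _ < ρ₀ := by
          rw [div_mul_eq_mul_div, div_lt_iff₀ (by positivity)]
          nlinarith [norm_nonneg (y₀ - y₁)]
  obtain ⟨c₂, hc₂C, hc₂⟩ := hy₂mem
  rcases exists_nat_ge (max (n : ℝ) ‖c₂ - x₀‖) with ⟨k, hk⟩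
  have hkn : (n : ℝ) ≤ k := le_trans (le_max_left _ _) hk
  have hkc₂ : ‖c₂ - x₀‖ ≤ k := le_trans (le_max_right _ _) hk
  set s : ℝ := t / (1 + t) with hs
  have hspos : 0 < s := div_pos htpos (by linarith)
  have hs1 : s < 1 := by
    rw [hs, div_lt_one (by linarith)]; linarith
  have hst : (1 - s) * t = s := by rw [hs]; field_simp; ring
  -- the affine contraction towards y₂ maps D n into D k
  have hmaps : ∀ v ∈ D n, s • v + (1 - s) • y₂ ∈ D k := by
    intro v hv
    have hφcont : Continuous (fun w : Y => s • w + (1 - s) • y₂) :=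
      (continuous_id.const_smul s).add continuous_const
    have h1 : s • v + (1 - s) • y₂ ∈
        closure ((fun w : Y => s • w + (1 - s) • y₂) '' (Λ '' (C ∩ closedBall x₀ n))) := by
      apply image_closure_subset_closure_image hφcont
      exact mem_image_of_mem _ hv
    apply closure_mono ?_ h1
    rintro w ⟨w', ⟨a, ⟨haC, haB⟩, rfl⟩, rfl⟩
    refine ⟨s • a + (1 - s) • c₂, ⟨hCconv haC hc₂C hspos.le (by linarith) (by ring), ?_⟩, ?_⟩
    · simp only [mem_closedBall, dist_eq_norm]
      have : s • a + (1 - s) • c₂ - x₀ = s • (a - x₀) + (1 - s) • (c₂ - x₀) := by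
        module
      rw [this]
      calc ‖s • (a - x₀) + (1 - s) • (c₂ - x₀)‖
          ≤ s * ‖a - x₀‖ + (1 - s) * ‖c₂ - x₀‖ := by
            refine le_trans (norm_add_le _ _) ?_
            rw [norm_smul, norm_smul, Real.norm_eq_abs, Real.norm_eq_abs,
              abs_of_pos hspos, abs_of_pos (by linarith)]
        _ ≤ s * k + (1 - s) * k := by
            have haB' : ‖a - x₀‖ ≤ n := by simpa [dist_eq_norm] using haB
            have h1 : ‖a - x₀‖ ≤ (k : ℝ) := le_trans haB' hkn
            have h2 : ‖c₂ - x₀‖ ≤ (k : ℝ) := hkc₂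
            nlinarith
        _ = k := by ring
    · rw [map_add, map_smul, map_smul, hc₂]
  -- conclude
  refine ⟨k, s * ρ₁ / 2, by positivity, ?_⟩
  intro z hz
  have hzball : z ∈ ball y₀ (s * ρ₁) := by
    refine lt_of_le_of_lt (mem_closedBall.1 hz) ?_
    have := mul_pos hspos hρ₁pos
    linarith
  set y' := y₁ + s⁻¹ • (z - y₀) with hy'
  have hy'ball : y' ∈ ball y₁ ρ₁ := by
    simp only [mem_ball, dist_eq_norm, hy', add_sub_cancel_left]
    rw [norm_smul, Real.norm_eq_abs, abs_of_pos (inv_pos.2 hspos)]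
    have hz' : ‖z - y₀‖ < s * ρ₁ := by simpa [dist_eq_norm] using hzball
    calc s⁻¹ * ‖z - y₀‖ < s⁻¹ * (s * ρ₁) := by
          exact mul_lt_mul_of_pos_left hz' (inv_pos.2 hspos)
      _ = ρ₁ := by field_simp
  have hzdecomp : z = s • y' + (1 - s) • y₂ := by
    rw [hy', hy₂def]
    match_scalars
    · field_simp
    · field_simp; linarith [hst]
    · field_simp; linarith [hst]
  rw [hzdecomp]
  exact hmaps y' (hball₁ hy'ball)

lemma approx_selection {X Y : Type*} [NormedAddCommGroup X] [NormedSpace ℝ X]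
    [NormedAddCommGroup Y] [NormedSpace ℝ Y]
    (Λ : X →L[ℝ] Y) (K : Set X) (hK : Convex ℝ K) {x₀ : X} (hx₀ : x₀ ∈ K)
    {y₀ : Y} {ρ δ : ℝ} (hδ : 0 < δ)
    (hcov : closedBall y₀ ρ ⊆ closure (Λ '' K)) :
    ∃ g : Y → X, Continuous g ∧ (∀ y, g y ∈ K) ∧
      ∀ y ∈ closedBall y₀ ρ, ‖Λ (g y) - y‖ ≤ δ := by
  set t : Y → Set X := fun y => {c | c ∈ K ∧ (y ∈ closedBall y₀ ρ → ‖Λ c - y‖ < δ)} with ht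
  have hconv : ∀ y, Convex ℝ (t y) := by
    intro y
    intro c₁ hc₁ c₂ hc₂ a b ha hb hab
    refine ⟨hK hc₁.1 hc₂.1 ha hb hab, fun hy => ?_⟩
    have h1 := hc₁.2 hy
    have h2 := hc₂.2 hy
    have : Λ (a • c₁ + b • c₂) - y = a • (Λ c₁ - y) + b • (Λ c₂ - y) := by
      rw [map_add, map_smul, map_smul]
      match_scalars <;> simp [hab] <;> linarith
    rw [this]
    calc ‖a • (Λ c₁ - y) + b • (Λ c₂ - y)‖ ≤ a * ‖Λ c₁ - y‖ + b * ‖Λ c₂ - y‖ := by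
          refine le_trans (norm_add_le _ _) ?_
          rw [norm_smul, norm_smul, Real.norm_eq_abs, Real.norm_eq_abs,
            abs_of_nonneg ha, abs_of_nonneg hb]
      _ ≤ a * max ‖Λ c₁ - y‖ ‖Λ c₂ - y‖ + b * max ‖Λ c₁ - y‖ ‖Λ c₂ - y‖ := by
          gcongr
          · exact le_max_left _ _
          · exact le_max_right _ _
      _ = max ‖Λ c₁ - y‖ ‖Λ c₂ - y‖ := by rw [← add_mul, hab, one_mul]
      _ < δ := max_lt h1 h2
  have hloc : ∀ y : Y, ∃ c : X, ∀ᶠ y' in 𝓝 y, c ∈ t y' := by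
    intro y
    by_cases hy : y ∈ closedBall y₀ ρ
    · obtain ⟨c, hcK, hc⟩ : ∃ c ∈ K, ‖Λ c - y‖ < δ / 2 := by
        have := hcov hy
        rw [Metric.mem_closure_iff] at this
        obtain ⟨w, ⟨c, hcK, rfl⟩, hw⟩ := this (δ / 2) (by linarith)
        exact ⟨c, hcK, by rwa [dist_comm, dist_eq_norm] at hw⟩
      refine ⟨c, ?_⟩
      have hball : Metric.ball y (δ / 2) ∈ 𝓝 y := ball_mem_nhds _ (by linarith)
      filter_upwards [hball] with y' hy'
      refine ⟨hcK, fun _ => ?_⟩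
      have : ‖Λ c - y'‖ ≤ ‖Λ c - y‖ + ‖y - y'‖ := norm_sub_le_norm_sub_add_norm_sub _ _ _
      have hy'' : ‖y - y'‖ < δ / 2 := by rw [← dist_eq_norm, dist_comm]; exact hy'
      linarith
    · refine ⟨x₀, ?_⟩
      have : (closedBall y₀ ρ)ᶜ ∈ 𝓝 y := (Metric.isClosed_closedBall.isOpen_compl).mem_nhds hy
      filter_upwards [this] with y' hy'
      exact ⟨hx₀, fun h => absurd h hy'⟩
  obtain ⟨g, hg⟩ := exists_continuous_forall_mem_convex_of_local_const hconv hloc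
  exact ⟨g, g.continuous, fun y => (hg y).1, fun y hy => le_of_lt ((hg y).2 hy)⟩

section Proj
variable {X : Type*} [NormedAddCommGroup X] [NormedSpace ℝ X]
variable {C : Set X}

lemma G_nonempty (hCcl : IsClosed C) (hne : C.Nonempty) (η : X) :
    ∃ g ∈ C, ‖η - g‖ ≤ 2 * infDist η C := by
  rcases eq_or_lt_of_le (infDist_nonneg (s := C) (x := η)) with h0 | hpos
  · have hη : η ∈ C := (hCcl.mem_iff_infDist_zero hne).2 h0.symm
    exact ⟨η, hη, by simp only [sub_self, norm_zero]; positivity⟩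
  · obtain ⟨g, hgC, hg⟩ := (infDist_lt_iff hne).1 (by linarith : infDist η C < 2 * infDist η C)
    exact ⟨g, hgC, by rw [← dist_eq_norm]; exact hg.le⟩

/-- Lower semicontinuity of the 2-quasi-projection multimap. -/
lemma G_lsc (hCconv : Convex ℝ C) (hCcl : IsClosed C) (hne : C.Nonempty)
    (η₁ : X) (g₁ : X) (hg₁C : g₁ ∈ C) (hg₁ : ‖η₁ - g₁‖ ≤ 2 * infDist η₁ C)
    {ε : ℝ} (hε : 0 < ε) :
    ∃ r > 0, ∀ η : X, ‖η - η₁‖ < r →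
      ∃ g ∈ C, ‖η - g‖ ≤ 2 * infDist η C ∧ ‖g - g₁‖ < ε := by
  set d₀ := infDist η₁ C with hd₀
  have hd₀0 : 0 ≤ d₀ := infDist_nonneg
  have hlip : ∀ η η' : X, infDist η C ≤ infDist η' C + ‖η - η'‖ := by
    intro η η'
    simpa [dist_eq_norm] using infDist_le_infDist_add_dist (x := η) (y := η') (s := C)
  rcases eq_or_lt_of_le hd₀0 with h0 | hpos
  · -- degenerate case : η₁ ∈ C and g₁ = η₁
    have hη₁ : η₁ ∈ C := (hCcl.mem_iff_infDist_zero hne).2 h0.symm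
    have hg₁η : g₁ = η₁ := by
      have : ‖η₁ - g₁‖ ≤ 0 := by rw [← h0] at hg₁; linarith
      have := norm_nonneg (η₁ - g₁)
      have : ‖η₁ - g₁‖ = 0 := le_antisymm ‹_› ‹_›
      rw [norm_sub_eq_zero_iff] at this; exact this.symm
    refine ⟨ε / 3, by linarith, fun η hη => ?_⟩
    set d := infDist η C with hd
    have hdle : d ≤ ‖η - η₁‖ := by
      simpa [dist_eq_norm] using infDist_le_dist_of_mem (x := η) hη₁
    rcases eq_or_lt_of_le (infDist_nonneg (s := C) (x := η)) with h0' | hpos'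
    · have hηC : η ∈ C := (hCcl.mem_iff_infDist_zero hne).2 h0'.symm
      refine ⟨η, hηC, by simp only [sub_self, norm_zero]; positivity, ?_⟩
      rw [hg₁η]; linarith
    · obtain ⟨c, hcC, hc⟩ := (infDist_lt_iff hne).1 (by linarith : infDist η C < 2 * d)
      rw [dist_eq_norm] at hc
      refine ⟨c, hcC, hc.le, ?_⟩
      rw [hg₁η]
      calc ‖c - η₁‖ ≤ ‖c - η‖ + ‖η - η₁‖ := norm_sub_le_norm_sub_add_norm_sub _ _ _
        _ < 2 * d + ε / 3 := by rw [norm_sub_rev c η]; exact add_lt_add hc hη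
        _ ≤ 2 * ‖η - η₁‖ + ε / 3 := by linarith
        _ < ε := by linarith
  · -- main case : d₀ > 0
    set s : ℝ := min 1 (ε / (8 * d₀)) with hs
    have hspos : 0 < s := lt_min one_pos (by positivity)
    have hs1 : s ≤ 1 := min_le_left _ _
    refine ⟨min (d₀ / 4) (s * d₀ / 6), by positivity, fun η hη => ?_⟩
    have he1 : ‖η - η₁‖ < d₀ / 4 := lt_of_lt_of_le hη (min_le_left _ _)
    have he2 : ‖η - η₁‖ < s * d₀ / 6 := lt_of_lt_of_le hη (min_le_right _ _)
    set d := infDist η C with hd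
    set e := ‖η - η₁‖ with he
    have hdlow : d₀ - e ≤ d := by
      have := hlip η₁ η
      rw [norm_sub_rev] at this
      linarith
    have hdup : d ≤ d₀ + e := hlip η η₁
    have hdpos : 0 < d := by linarith
    obtain ⟨c, hcC, hc⟩ := (infDist_lt_iff hne).1
      (by linarith : infDist η C < d + d₀ / 4)
    rw [dist_eq_norm] at hc
    refine ⟨g₁ + s • (c - g₁), hCconv.add_smul_sub_mem hg₁C hcC ⟨hspos.le, hs1⟩, ?_, ?_⟩
    · -- distance estimate
      have hexp : η - (g₁ + s • (c - g₁)) = (1 - s) • (η - g₁) + s • (η - c) := by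
        module
      rw [hexp]
      have hb1 : ‖η - g₁‖ ≤ 2 * d + 3 * e := by
        calc ‖η - g₁‖ ≤ e + ‖η₁ - g₁‖ := by
              rw [he]
              have := norm_add_le (η - η₁) (η₁ - g₁)
              simpa using this
          _ ≤ e + 2 * d₀ := by linarith
          _ ≤ 2 * d + 3 * e := by linarith
      calc ‖(1 - s) • (η - g₁) + s • (η - c)‖
          ≤ (1 - s) * ‖η - g₁‖ + s * ‖η - c‖ := by
            refine le_trans (norm_add_le _ _) ?_
            rw [norm_smul, norm_smul, Real.norm_eq_abs, Real.norm_eq_abs,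
              abs_of_nonneg (by linarith), abs_of_nonneg hspos.le]
        _ ≤ (1 - s) * (2 * d + 3 * e) + s * (d + d₀ / 4) := by
            have h1 : (0:ℝ) ≤ 1 - s := by linarith
            nlinarith [hc.le]
        _ ≤ 2 * d := by nlinarith
    · -- proximity to g₁
      have : ‖g₁ + s • (c - g₁) - g₁‖ = s * ‖c - g₁‖ := by
        rw [add_sub_cancel_left, norm_smul, Real.norm_eq_abs, abs_of_pos hspos]
      rw [this]
      have hb2 : ‖c - g₁‖ ≤ 4 * d₀ := by
        calc ‖c - g₁‖ ≤ ‖c - η‖ + ‖η - η₁‖ + ‖η₁ - g₁‖ := by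
              have := norm_add_le (c - η) (η - η₁)
              have h2 := norm_add_le (c - η + (η - η₁)) (η₁ - g₁)
              simp only [sub_add_sub_cancel] at *
              linarith
          _ ≤ (d + d₀ / 4) + e + 2 * d₀ := by
              rw [norm_sub_rev] at hc
              linarith
          _ ≤ 4 * d₀ := by linarith
      have hsε : s ≤ ε / (8 * d₀) := min_le_right _ _
      calc s * ‖c - g₁‖ ≤ (ε / (8 * d₀)) * (4 * d₀) := by
            nlinarith [norm_nonneg (c - g₁)]
        _ = ε / 2 := by field_simp; ring
        _ < ε := by linarith

end Proj

section Proj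
variable {X : Type*} [NormedAddCommGroup X] [NormedSpace ℝ X]
variable {C : Set X}

/-- One Michael-type refinement step. -/
lemma michael_step (hCconv : Convex ℝ C) (hCcl : IsClosed C) (hne : C.Nonempty)
    {f : X → X} (hf : Continuous f) {ε : ℝ} (hε : 0 < ε) {ε' : ℝ} (hε' : 0 < ε')
    (hApx : ∀ η, ∃ g ∈ C, ‖η - g‖ ≤ 2 * infDist η C ∧ ‖f η - g‖ < ε) :
    ∃ f' : X → X, Continuous f' ∧
      (∀ η, ∃ g ∈ C, ‖η - g‖ ≤ 2 * infDist η C ∧ ‖f' η - g‖ < ε') ∧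
      ∀ η, ‖f' η - f η‖ ≤ ε + ε' := by
  set t : X → Set X := fun η => {v | ∃ g ∈ C, ‖η - g‖ ≤ 2 * infDist η C ∧
    ‖g - f η‖ < ε ∧ ‖v - g‖ < ε'} with ht
  have hconv : ∀ η, Convex ℝ (t η) := by
    intro η v₁ hv₁ v₂ hv₂ a b ha hb hab
    obtain ⟨g₁, hg₁C, hg₁d, hg₁f, hg₁v⟩ := hv₁
    obtain ⟨g₂, hg₂C, hg₂d, hg₂f, hg₂v⟩ := hv₂
    refine ⟨a • g₁ + b • g₂, hCconv hg₁C hg₂C ha hb hab, ?_, ?_, ?_⟩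
    · have hexp : η - (a • g₁ + b • g₂) = a • (η - g₁) + b • (η - g₂) := by
        match_scalars <;> simp <;> linarith
      rw [hexp]
      calc ‖a • (η - g₁) + b • (η - g₂)‖ ≤ a * ‖η - g₁‖ + b * ‖η - g₂‖ := by
            refine le_trans (norm_add_le _ _) ?_
            rw [norm_smul, norm_smul, Real.norm_eq_abs, Real.norm_eq_abs,
              abs_of_nonneg ha, abs_of_nonneg hb]
        _ ≤ a * (2 * infDist η C) + b * (2 * infDist η C) := by
            have := mul_le_mul_of_nonneg_left hg₁d ha
            have := mul_le_mul_of_nonneg_left hg₂d hb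
            linarith
        _ = 2 * infDist η C := by rw [← add_mul, hab, one_mul]
    · have hexp : a • g₁ + b • g₂ - f η = a • (g₁ - f η) + b • (g₂ - f η) := by
        match_scalars <;> simp <;> linarith
      rw [hexp]
      calc ‖a • (g₁ - f η) + b • (g₂ - f η)‖ ≤ a * ‖g₁ - f η‖ + b * ‖g₂ - f η‖ := by
            refine le_trans (norm_add_le _ _) ?_
            rw [norm_smul, norm_smul, Real.norm_eq_abs, Real.norm_eq_abs,
              abs_of_nonneg ha, abs_of_nonneg hb]
        _ ≤ a * max ‖g₁ - f η‖ ‖g₂ - f η‖ + b * max ‖g₁ - f η‖ ‖g₂ - f η‖ := by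
            gcongr
            · exact le_max_left _ _
            · exact le_max_right _ _
        _ = max ‖g₁ - f η‖ ‖g₂ - f η‖ := by rw [← add_mul, hab, one_mul]
        _ < ε := max_lt hg₁f hg₂f
    · have hexp : a • v₁ + b • v₂ - (a • g₁ + b • g₂) = a • (v₁ - g₁) + b • (v₂ - g₂) := by
        rw [smul_sub, smul_sub]; abel
      rw [hexp]
      calc ‖a • (v₁ - g₁) + b • (v₂ - g₂)‖ ≤ a * ‖v₁ - g₁‖ + b * ‖v₂ - g₂‖ := by
            refine le_trans (norm_add_le _ _) ?_
            rw [norm_smul, norm_smul, Real.norm_eq_abs, Real.norm_eq_abs,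
              abs_of_nonneg ha, abs_of_nonneg hb]
        _ ≤ a * max ‖v₁ - g₁‖ ‖v₂ - g₂‖ + b * max ‖v₁ - g₁‖ ‖v₂ - g₂‖ := by
            gcongr
            · exact le_max_left _ _
            · exact le_max_right _ _
        _ = max ‖v₁ - g₁‖ ‖v₂ - g₂‖ := by rw [← add_mul, hab, one_mul]
        _ < ε' := max_lt hg₁v hg₂v
  have hloc : ∀ η₁ : X, ∃ c : X, ∀ᶠ η in 𝓝 η₁, c ∈ t η := by
    intro η₁
    obtain ⟨g₁, hg₁C, hg₁d, hg₁f⟩ := hApx η₁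
    set s : ℝ := ε - ‖f η₁ - g₁‖ with hs
    have hspos : 0 < s := by rw [hs]; linarith
    obtain ⟨r, hrpos, hr⟩ := G_lsc hCconv hCcl hne η₁ g₁ hg₁C hg₁d
      (lt_min (by linarith : (0:ℝ) < s / 3) hε')
    refine ⟨g₁, ?_⟩
    have h1 : ∀ᶠ η in 𝓝 η₁, ‖η - η₁‖ < r := by
      have := Metric.ball_mem_nhds η₁ hrpos
      filter_upwards [this] with η hη
      rwa [mem_ball, dist_eq_norm] at hη
    have h2 : ∀ᶠ η in 𝓝 η₁, ‖f η - f η₁‖ < s / 3 := by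
      have hc : ContinuousAt f η₁ := hf.continuousAt
      have := hc.preimage_mem_nhds (Metric.ball_mem_nhds (f η₁) (by linarith : (0:ℝ) < s / 3))
      filter_upwards [this] with η hη
      rwa [mem_preimage, mem_ball, dist_eq_norm] at hη
    filter_upwards [h1, h2] with η hη hfη
    obtain ⟨g, hgC, hgd, hgg₁⟩ := hr η hη
    have hgs : ‖g - g₁‖ < min (s / 3) ε' := hgg₁
    refine ⟨g, hgC, hgd, ?_, ?_⟩
    · calc ‖g - f η‖ ≤ ‖g - g₁‖ + ‖g₁ - f η₁‖ + ‖f η₁ - f η‖ := by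
            have := norm_add_le (g - g₁) (g₁ - f η₁)
            have h2 := norm_add_le (g - g₁ + (g₁ - f η₁)) (f η₁ - f η)
            simp only [sub_add_sub_cancel] at *
            linarith
        _ < s / 3 + (ε - s) + s / 3 := by
            have e1 : ‖g - g₁‖ < s / 3 := lt_of_lt_of_le hgs (min_le_left _ _)
            have e2 : ‖g₁ - f η₁‖ = ε - s := by rw [hs, norm_sub_rev]; ring
            have e3 : ‖f η₁ - f η‖ < s / 3 := by rwa [norm_sub_rev]
            linarith [e2.le, e1, e3]
        _ < ε := by linarith
    · rw [norm_sub_rev]; exact lt_of_lt_of_le hgs (min_le_right _ _)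
  obtain ⟨f', hf'⟩ := exists_continuous_forall_mem_convex_of_local_const hconv hloc
  refine ⟨f', f'.continuous, fun η => ?_, fun η => ?_⟩
  · obtain ⟨g, hgC, hgd, _, hgv⟩ := hf' η
    exact ⟨g, hgC, hgd, hgv⟩
  · obtain ⟨g, _, _, hgf, hgv⟩ := hf' η
    calc ‖f' η - f η‖ ≤ ‖f' η - g‖ + ‖g - f η‖ := by
          have := norm_add_le (f' η - g) (g - f η)
          simpa using this
      _ ≤ ε + ε' := by linarith

end Proj

section Proj2
variable {X : Type*} [NormedAddCommGroup X] [NormedSpace ℝ X]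
variable {C : Set X}

lemma michael_base (hCconv : Convex ℝ C) (hCcl : IsClosed C) (hne : C.Nonempty)
    {ε : ℝ} (hε : 0 < ε) :
    ∃ f : X → X, Continuous f ∧
      ∀ η, ∃ g ∈ C, ‖η - g‖ ≤ 2 * infDist η C ∧ ‖f η - g‖ < ε := by
  set t : X → Set X := fun η => {v | ∃ g ∈ C, ‖η - g‖ ≤ 2 * infDist η C ∧ ‖v - g‖ < ε} with ht
  have hconv : ∀ η, Convex ℝ (t η) := by
    intro η v₁ hv₁ v₂ hv₂ a b ha hb hab
    obtain ⟨g₁, hg₁C, hg₁d, hg₁v⟩ := hv₁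
    obtain ⟨g₂, hg₂C, hg₂d, hg₂v⟩ := hv₂
    refine ⟨a • g₁ + b • g₂, hCconv hg₁C hg₂C ha hb hab, ?_, ?_⟩
    · have hexp : η - (a • g₁ + b • g₂) = a • (η - g₁) + b • (η - g₂) := by
        match_scalars <;> simp <;> linarith
      rw [hexp]
      calc ‖a • (η - g₁) + b • (η - g₂)‖ ≤ a * ‖η - g₁‖ + b * ‖η - g₂‖ := by
            refine le_trans (norm_add_le _ _) ?_
            rw [norm_smul, norm_smul, Real.norm_eq_abs, Real.norm_eq_abs,
              abs_of_nonneg ha, abs_of_nonneg hb]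
        _ ≤ a * (2 * infDist η C) + b * (2 * infDist η C) := by
            have := mul_le_mul_of_nonneg_left hg₁d ha
            have := mul_le_mul_of_nonneg_left hg₂d hb
            linarith
        _ = 2 * infDist η C := by rw [← add_mul, hab, one_mul]
    · have hexp : a • v₁ + b • v₂ - (a • g₁ + b • g₂) = a • (v₁ - g₁) + b • (v₂ - g₂) := by
        module
      rw [hexp]
      calc ‖a • (v₁ - g₁) + b • (v₂ - g₂)‖ ≤ a * ‖v₁ - g₁‖ + b * ‖v₂ - g₂‖ := by
            refine le_trans (norm_add_le _ _) ?_
            rw [norm_smul, norm_smul, Real.norm_eq_abs, Real.norm_eq_abs,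
              abs_of_nonneg ha, abs_of_nonneg hb]
        _ ≤ a * max ‖v₁ - g₁‖ ‖v₂ - g₂‖ + b * max ‖v₁ - g₁‖ ‖v₂ - g₂‖ := by
            gcongr
            · exact le_max_left _ _
            · exact le_max_right _ _
        _ = max ‖v₁ - g₁‖ ‖v₂ - g₂‖ := by rw [← add_mul, hab, one_mul]
        _ < ε := max_lt hg₁v hg₂v
  have hloc : ∀ η₁ : X, ∃ c : X, ∀ᶠ η in 𝓝 η₁, c ∈ t η := by
    intro η₁
    obtain ⟨g₁, hg₁C, hg₁d⟩ := G_nonempty hCcl hne η₁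
    obtain ⟨r, hrpos, hr⟩ := G_lsc hCconv hCcl hne η₁ g₁ hg₁C hg₁d hε
    refine ⟨g₁, ?_⟩
    have h1 : ∀ᶠ η in 𝓝 η₁, ‖η - η₁‖ < r := by
      filter_upwards [Metric.ball_mem_nhds η₁ hrpos] with η hη
      rwa [mem_ball, dist_eq_norm] at hη
    filter_upwards [h1] with η hη
    obtain ⟨g, hgC, hgd, hgg₁⟩ := hr η hη
    exact ⟨g, hgC, hgd, by rwa [norm_sub_rev]⟩
  obtain ⟨f, hf⟩ := exists_continuous_forall_mem_convex_of_local_const hconv hloc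
  exact ⟨f, f.continuous, hf⟩

/-- Continuous quasi-projection onto a closed convex set. -/
lemma exists_quasi_projection (hCconv : Convex ℝ C) (hCcl : IsClosed C) (hne : C.Nonempty)
    [CompleteSpace X] :
    ∃ P : X → X, Continuous P ∧ ∀ η, P η ∈ C ∧ ‖η - P η‖ ≤ 2 * infDist η C := by
  -- iterated Michael refinement
  set q : ℕ → ℝ := fun n => (1 / 2 : ℝ) ^ n with hq
  have hqpos : ∀ n, 0 < q n := fun n => by positivity
  set Apx : ℝ → (X → X) → Prop :=
    fun ε f => ∀ η, ∃ g ∈ C, ‖η - g‖ ≤ 2 * infDist η C ∧ ‖f η - g‖ < ε with hApx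
  have hstep : ∀ n : ℕ, ∀ fp : {f : X → X // Continuous f ∧ Apx (q n) f},
      ∃ fp' : {f : X → X // Continuous f ∧ Apx (q (n + 1)) f},
        ∀ η, ‖fp'.1 η - fp.1 η‖ ≤ q n + q (n + 1) := by
    intro n ⟨f, hfc, hf⟩
    obtain ⟨f', hf'c, hf', hclose⟩ :=
      michael_step hCconv hCcl hne hfc (hqpos n) (hqpos (n + 1)) hf
    exact ⟨⟨f', hf'c, hf'⟩, hclose⟩
  choose next hnext using hstep
  obtain ⟨f₀, hf₀c, hf₀⟩ := michael_base hCconv hCcl hne (hqpos 0)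
  set seq : ∀ n : ℕ, {f : X → X // Continuous f ∧ Apx (q n) f} :=
    fun n => Nat.rec ⟨f₀, hf₀c, hf₀⟩ (fun n fp => next n fp) n with hseq
  have hconsec : ∀ n η, ‖(seq (n + 1)).1 η - (seq n).1 η‖ ≤ q n + q (n + 1) :=
    fun n => hnext n (seq n)
  -- telescoping
  have htel : ∀ n k η, ‖(seq (n + k)).1 η - (seq n).1 η‖ ≤ 3 * q n * (1 - q k) := by
    intro n k η
    induction k with
    | zero =>
        have : n + 0 = n := rfl
        rw [this, sub_self, norm_zero, hq]
        norm_num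
    | succ k ih =>
        have h1 := hconsec (n + k) η
        have e1 : ‖(seq (n + (k+1))).1 η - (seq n).1 η‖ ≤
            ‖(seq (n + k + 1)).1 η - (seq (n + k)).1 η‖ + ‖(seq (n + k)).1 η - (seq n).1 η‖ := by
          have := norm_add_le ((seq (n + k + 1)).1 η - (seq (n + k)).1 η)
            ((seq (n + k)).1 η - (seq n).1 η)
          simp only [sub_add_sub_cancel] at this
          have heq : n + (k + 1) = n + k + 1 := by omega
          rw [heq]
          exact this
        have hqq : q (n + k) = q n * q k := by rw [hq]; simp [pow_add]
        have hqq1 : q (n + k + 1) = q n * q k / 2 := by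
          rw [hq]; simp [pow_add, pow_succ]; ring
        have hqk : q (k + 1) = q k / 2 := by rw [hq]; simp [pow_succ]; ring
        have hqnn : 0 < q n := hqpos n
        have hqkk : 0 < q k := hqpos k
        calc ‖(seq (n + (k+1))).1 η - (seq n).1 η‖
            ≤ (q (n + k) + q (n + k + 1)) + 3 * q n * (1 - q k) := by linarith
          _ = 3 * q n * (1 - q (k + 1)) := by rw [hqq, hqq1, hqk]; ring
  have htel' : ∀ n k η, ‖(seq (n + k)).1 η - (seq n).1 η‖ ≤ 3 * q n := by
    intro n k η
    have h1 := htel n k η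
    have h2 : 0 < q k := hqpos k
    have h3 : 0 < q n := hqpos n
    nlinarith
  have hq0 : Tendsto (fun n => q n) atTop (𝓝 0) := by
    rw [hq]
    exact tendsto_pow_atTop_nhds_zero_of_lt_one (by norm_num) (by norm_num)
  -- pointwise limits
  have hcauchy : ∀ η, CauchySeq (fun n => (seq n).1 η) := by
    intro η
    apply cauchySeq_of_le_geometric (1 / 2 : ℝ) 3 (by norm_num)
    intro n
    rw [dist_eq_norm, norm_sub_rev]
    have := hconsec n η
    have h1 : q n + q (n + 1) ≤ 3 * q n := by
      have : q (n + 1) = q n / 2 := by rw [hq]; simp [pow_succ]; ring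
      have := hqpos n
      linarith
    calc ‖(seq (n+1)).1 η - (seq n).1 η‖ ≤ q n + q (n + 1) := hconsec n η
      _ ≤ 3 * q n := h1
      _ = 3 * (1/2 : ℝ)^n := by rw [hq]
  have hlim : ∀ η, ∃ L, Tendsto (fun n => (seq n).1 η) atTop (𝓝 L) :=
    fun η => cauchySeq_tendsto_of_complete (hcauchy η)
  choose P hP using hlim
  -- uniform bound ‖P η - (seq n).1 η‖ ≤ 3 q n
  have hPbound : ∀ n η, ‖P η - (seq n).1 η‖ ≤ 3 * q n := by
    intro n η
    have h1 : Tendsto (fun k => (seq (n + k)).1 η) atTop (𝓝 (P η)) := by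
      have := (hP η).comp (tendsto_add_atTop_nat n)
      simpa [Function.comp_def, Nat.add_comm] using this
    have h2 : Tendsto (fun k => ‖(seq (n + k)).1 η - (seq n).1 η‖) atTop
        (𝓝 ‖P η - (seq n).1 η‖) := by
      exact ((h1.sub tendsto_const_nhds).norm)
    exact le_of_tendsto h2 (Filter.Eventually.of_forall (fun k => htel' n k η))
  -- continuity of P
  have hPcont : Continuous P := by
    have huni : TendstoUniformly (fun n η => (seq n).1 η) P atTop := by
      rw [Metric.tendstoUniformly_iff]
      intro ε hε
      have h3 : Tendsto (fun n => 3 * q n) atTop (𝓝 0) := by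
        simpa using hq0.const_mul (3:ℝ)
      have h4 : ∀ᶠ n in atTop, 3 * q n < ε := (h3.eventually (gt_mem_nhds hε))
      filter_upwards [h4] with n hn η
      rw [dist_eq_norm]
      exact lt_of_le_of_lt (hPbound n η) hn
    exact huni.continuous (Filter.Eventually.of_forall (fun n => (seq n).2.1)).frequently
  refine ⟨P, hPcont, fun η => ?_⟩
  -- P η ∈ G η via closedness
  obtain hApxn := fun n => (seq n).2.2 η
  choose gs hgsC hgsd hgsf using hApxn
  have hgs_tendsto : Tendsto gs atTop (𝓝 (P η)) := by
    rw [tendsto_iff_dist_tendsto_zero]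
    have hb : ∀ n, dist (gs n) (P η) ≤ 4 * q n := by
      intro n
      calc dist (gs n) (P η) ≤ dist (gs n) ((seq n).1 η) + dist ((seq n).1 η) (P η) :=
            dist_triangle _ _ _
        _ ≤ q n + 3 * q n := by
            have h1 : dist (gs n) ((seq n).1 η) ≤ q n := by
              rw [dist_comm, dist_eq_norm]; exact (hgsf n).le
            have h2 : dist ((seq n).1 η) (P η) ≤ 3 * q n := by
              rw [dist_comm, dist_eq_norm]; exact hPbound n η
            linarith
        _ = 4 * q n := by ring
    have h3 : Tendsto (fun n => 4 * q n) atTop (𝓝 0) := by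
      simpa using hq0.const_mul (4:ℝ)
    exact squeeze_zero (fun n => dist_nonneg) hb h3
  constructor
  · exact hCcl.mem_of_tendsto hgs_tendsto (Filter.Eventually.of_forall hgsC)
  · have h2 : Tendsto (fun n => ‖η - gs n‖) atTop (𝓝 ‖η - P η‖) :=
      ((tendsto_const_nhds.sub hgs_tendsto).norm)
    exact le_of_tendsto h2 (Filter.Eventually.of_forall hgsd)

end Proj2


set_option maxHeartbeats 2000000 in
/-- **Proposition (corollary of the implicit function theorem for inclusions).** -/
theorem surjection_onto_convex_with_estimate
    {X Y : Type*} [NormedAddCommGroup X] [NormedSpace ℝ X] [CompleteSpace X]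
    [NormedAddCommGroup Y] [NormedSpace ℝ Y] [CompleteSpace Y]
    (Λ : X →L[ℝ] Y) (C : Set X) (hCconv : Convex ℝ C) (hCcl : IsClosed C)
    (x₀ : X) (hx₀ : x₀ ∈ C)
    (hint : Λ x₀ ∈ interior (Λ '' C)) :
    ∃ (V₁ : Set X) (U₁ : Set Y) (U₂ : Set X) (a : ℝ) (R : X → Y → X → X),
      V₁ ∈ 𝓝 x₀ ∧ U₁ ∈ 𝓝 (Λ x₀) ∧ U₂ ∈ 𝓝 (0 : X) ∧ 0 < a ∧
      ContinuousOn (fun p : X × Y × X => R p.1 p.2.1 p.2.2) (V₁ ×ˢ U₁ ×ˢ U₂) ∧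
      ∀ ξ ∈ V₁, ∀ σ₁ ∈ U₁, ∀ σ₂ ∈ U₂,
        Λ (R ξ σ₁ σ₂) = σ₁ ∧
        (∃ c ∈ C, R ξ σ₁ σ₂ = σ₂ + c) ∧
        ‖R ξ σ₁ σ₂ - ξ‖ ≤ a * (‖Λ ξ - σ₁‖ + infDist (ξ - σ₂) C) := by
  obtain ⟨m, ρ, hρpos, hcov⟩ := baire_bounded_cover Λ C hCconv x₀ hx₀ hint
  set y₀ := Λ x₀ with hy₀def
  set K : Set X := C ∩ closedBall x₀ m with hKdef
  have hKconv : Convex ℝ K := hCconv.inter (convex_closedBall _ _)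
  have hx₀K : x₀ ∈ K := ⟨hx₀, mem_closedBall_self (Nat.cast_nonneg m)⟩
  obtain ⟨g, hgcont, hgK, hgapp⟩ :=
    approx_selection Λ K hKconv hx₀K (by positivity : (0:ℝ) < ρ / 8) hcov
  obtain ⟨P, hPcont, hPprop⟩ := exists_quasi_projection hCconv hCcl ⟨x₀, hx₀⟩
  -- constants
  have hm0 : (0:ℝ) ≤ (m:ℝ) := Nat.cast_nonneg m
  set M : ℝ := (m:ℝ) + 3 with hMdef
  have hM3 : (3:ℝ) ≤ M := by rw [hMdef]; linarith
  have hMpos : (0:ℝ) < M := by linarith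
  set εs : ℝ := ρ / (3 * M) with hεsdef
  have hεspos : 0 < εs := by rw [hεsdef]; positivity
  have hεsρ : εs ≤ ρ / 9 := by
    rw [hεsdef]
    rw [div_le_div_iff₀ (by positivity) (by norm_num)]
    nlinarith
  set b : ℝ := 8 * M / (3 * ρ) with hbdef
  have hbpos : 0 < b := by rw [hbdef]; positivity
  have hbεs : b * εs = 8 / 9 := by
    rw [hbdef, hεsdef]
    field_simp
    ring
  -- the one-step corrector
  set t : X × Y → ℝ := fun p => (2 / ρ) * ‖p.2 - Λ p.1‖ with htdef
  set w : X × Y → Y := fun p => y₀ + (t p)⁻¹ • (p.2 - Λ p.1) + (Λ p.1 - y₀) with hwdef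
  set W : X × Y → X := fun p => p.1 + (t p) • (g (w p) - p.1) with hWdef
  have htcont : Continuous t := by
    apply Continuous.mul continuous_const
    exact (continuous_snd.sub (Λ.continuous.comp continuous_fst)).norm
  have htnonneg : ∀ p, 0 ≤ t p := by
    intro p
    rw [htdef]
    positivity
  have hgnorm : ∀ y, ‖g y‖ ≤ ‖x₀‖ + m := by
    intro y
    have h1 : ‖g y - x₀‖ ≤ m := by
      have := (hgK y).2
      rwa [mem_closedBall, dist_eq_norm] at this
    calc ‖g y‖ = ‖x₀ + (g y - x₀)‖ := by congr 1; abel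
      _ ≤ ‖x₀‖ + ‖g y - x₀‖ := norm_add_le _ _
      _ ≤ ‖x₀‖ + m := by linarith
  have hWcont : Continuous W := by
    rw [hWdef]
    apply continuous_fst.add
    have hsmul : Continuous (fun p : X × Y => t p • g (w p)) := by
      rw [continuous_iff_continuousAt]
      intro p₀
      by_cases h0 : t p₀ = 0
      · rw [ContinuousAt]
        have hval : t p₀ • g (w p₀) = 0 := by rw [h0, zero_smul]
        rw [hval]
        apply squeeze_zero_norm (a := fun p => t p * (‖x₀‖ + m))
        · intro p
          rw [norm_smul, Real.norm_eq_abs, abs_of_nonneg (htnonneg p)]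
          exact mul_le_mul_of_nonneg_left (hgnorm (w p)) (htnonneg p)
        · have : Tendsto (fun p => t p * (‖x₀‖ + m)) (𝓝 p₀) (𝓝 (t p₀ * (‖x₀‖ + m))) :=
            (htcont.tendsto p₀).mul tendsto_const_nhds
          rwa [h0, zero_mul] at this
      · have hwcont : ContinuousAt w p₀ := by
          rw [hwdef]
          apply ContinuousAt.add
          apply ContinuousAt.add continuousAt_const
          · exact ((htcont.continuousAt).inv₀ h0).smul
              ((continuous_snd.sub (Λ.continuous.comp continuous_fst)).continuousAt)
          · exact ((Λ.continuous.comp continuous_fst).sub continuous_const).continuousAt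
        exact (htcont.continuousAt).smul (hgcont.continuousAt.comp hwcont)
    have : Continuous (fun p : X × Y => t p • p.1) := htcont.smul continuous_fst
    have heq : (fun p : X × Y => t p • (g (w p) - p.1)) =
        fun p => t p • g (w p) - t p • p.1 := by
      funext p
      rw [smul_sub]
    rw [heq]
    exact hsmul.sub this
  -- one-step estimates
  have hWstep : ∀ p : X × Y, p.1 ∈ C → ‖p.1 - x₀‖ ≤ 3 → ‖p.2 - y₀‖ ≤ ρ / 4 →
      ‖p.2 - Λ p.1‖ ≤ εs →
      W p ∈ C ∧ ‖W p - p.1‖ ≤ (2 * M / ρ) * ‖p.2 - Λ p.1‖ ∧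
        ‖p.2 - Λ (W p)‖ ≤ (1 / 4) * ‖p.2 - Λ p.1‖ := by
    rintro ⟨c, τ⟩ hcC hc3 hτ hτc
    simp only at hcC hc3 hτ hτc
    set e : ℝ := ‖τ - Λ c‖ with hedef
    have he0 : 0 ≤ e := norm_nonneg _
    rcases eq_or_lt_of_le he0 with he | hepos
    · -- e = 0 : W = c
      have ht0 : t (c, τ) = 0 := by
        rw [htdef]
        simp only
        rw [← hedef, ← he, mul_zero]
      have hWeq : W (c, τ) = c := by
        rw [hWdef]
        simp only
        rw [ht0, zero_smul, add_zero]
      have hτΛ : τ - Λ c = 0 := by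
        have h1 : ‖τ - Λ c‖ = 0 := by rw [← hedef]; exact he.symm
        exact norm_eq_zero.1 h1
      refine ⟨by rw [hWeq]; exact hcC, ?_, ?_⟩
      · rw [hWeq, sub_self, norm_zero]
        have h9 : (0:ℝ) ≤ 2 * M / ρ := by positivity
        nlinarith
      · rw [hWeq, hτΛ, norm_zero]
        linarith
    · -- e > 0
      have htval : t (c, τ) = (2 / ρ) * e := by rw [htdef]
      have htpos : 0 < t (c, τ) := by rw [htval]; positivity
      have htne : t (c, τ) ≠ 0 := ne_of_gt htpos
      have ht1 : t (c, τ) ≤ 1 := by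
        rw [htval]
        have : (2 / ρ) * e ≤ (2 / ρ) * εs := by
          apply mul_le_mul_of_nonneg_left hτc (by positivity)
        apply le_trans this
        rw [hεsdef]
        rw [div_mul_div_comm]
        rw [div_le_one (by positivity)]
        nlinarith
      -- w is in the closed ball
      have hwball : w (c, τ) ∈ closedBall y₀ ρ := by
        rw [mem_closedBall, dist_eq_norm, hwdef]
        simp only
        have h1 : ‖y₀ + (t (c,τ))⁻¹ • (τ - Λ c) + (Λ c - y₀) - y₀‖ ≤
            (t (c,τ))⁻¹ * e + ‖Λ c - y₀‖ := by
          have heq : y₀ + (t (c,τ))⁻¹ • (τ - Λ c) + (Λ c - y₀) - y₀ =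
              (t (c,τ))⁻¹ • (τ - Λ c) + (Λ c - y₀) := by abel
          rw [heq]
          refine le_trans (norm_add_le _ _) ?_
          rw [norm_smul, Real.norm_eq_abs, abs_of_pos (inv_pos.2 htpos), ← hedef]
        have h2 : (t (c,τ))⁻¹ * e = ρ / 2 := by
          rw [htval]
          field_simp
        have h3 : ‖Λ c - y₀‖ ≤ ρ / 2 := by
          calc ‖Λ c - y₀‖ ≤ ‖Λ c - τ‖ + ‖τ - y₀‖ := by
                have := norm_add_le (Λ c - τ) (τ - y₀)
                simpa using this
            _ ≤ εs + ρ / 4 := by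
                rw [norm_sub_rev]
                exact add_le_add hτc hτ
            _ ≤ ρ / 9 + ρ / 4 := by linarith
            _ ≤ ρ / 2 := by linarith
        calc ‖y₀ + (t (c,τ))⁻¹ • (τ - Λ c) + (Λ c - y₀) - y₀‖
            ≤ (t (c,τ))⁻¹ * e + ‖Λ c - y₀‖ := h1
          _ ≤ ρ / 2 + ρ / 2 := by rw [h2]; linarith
          _ = ρ := by ring
      have hgw : g (w (c, τ)) ∈ C := (hgK _).1
      have hgwm : ‖g (w (c, τ)) - x₀‖ ≤ m := by
        have := (hgK (w (c, τ))).2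
        rwa [mem_closedBall, dist_eq_norm] at this
      constructor
      · -- membership in C
        have hWeq : W (c, τ) = (1 - t (c,τ)) • c + t (c,τ) • g (w (c, τ)) := by
          rw [hWdef]
          simp only
          module
        rw [hWeq]
        exact hCconv hcC hgw (by linarith) htpos.le (by ring)
      constructor
      · -- step size
        have hWeq : W (c, τ) - c = t (c,τ) • (g (w (c, τ)) - c) := by
          rw [hWdef]; simp only; abel
        rw [hWeq, norm_smul, Real.norm_eq_abs, abs_of_pos htpos]
        have h1 : ‖g (w (c, τ)) - c‖ ≤ M := by
          calc ‖g (w (c, τ)) - c‖ ≤ ‖g (w (c, τ)) - x₀‖ + ‖x₀ - c‖ := by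
                have := norm_add_le (g (w (c, τ)) - x₀) (x₀ - c)
                simpa using this
            _ ≤ m + 3 := by
                rw [norm_sub_rev x₀ c]
                exact add_le_add hgwm hc3
            _ = M := by rw [hMdef]
        calc t (c,τ) * ‖g (w (c, τ)) - c‖ ≤ t (c,τ) * M :=
              mul_le_mul_of_nonneg_left h1 htpos.le
          _ = (2 * M / ρ) * e := by rw [htval]; ring
      · -- error contraction
        have hcancel : t (c,τ) • (t (c,τ))⁻¹ • (τ - Λ c) = τ - Λ c := by
          rw [smul_smul, mul_inv_cancel₀ htne, one_smul]
        have hkey0 : ∀ u : Y, τ - (Λ c + t (c,τ) • (u - Λ c)) =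
            t (c,τ) • (y₀ + (t (c,τ))⁻¹ • (τ - Λ c) + (Λ c - y₀) - u) := by
          intro u
          rw [smul_sub (t (c,τ)) u (Λ c),
            smul_sub (t (c,τ)) (y₀ + (t (c,τ))⁻¹ • (τ - Λ c) + (Λ c - y₀)) u,
            smul_add (t (c,τ)) (y₀ + (t (c,τ))⁻¹ • (τ - Λ c)) (Λ c - y₀),
            smul_add (t (c,τ)) y₀ ((t (c,τ))⁻¹ • (τ - Λ c)), hcancel,
            smul_sub (t (c,τ)) (Λ c) y₀]
          abel
        have hΛW : Λ (W (c, τ)) = Λ c + t (c,τ) • (Λ (g (w (c,τ))) - Λ c) := by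
          rw [hWdef]
          simp only
          rw [map_add, map_smul, map_sub]
        have hkey : τ - Λ (W (c, τ)) = t (c,τ) • (w (c, τ) - Λ (g (w (c, τ)))) := by
          rw [hΛW, hkey0 (Λ (g (w (c,τ))))]
        rw [hkey, norm_smul, Real.norm_eq_abs, abs_of_pos htpos]
        have h1 : ‖w (c, τ) - Λ (g (w (c, τ)))‖ ≤ ρ / 8 := by
          rw [norm_sub_rev]
          exact hgapp _ hwball
        calc t (c,τ) * ‖w (c, τ) - Λ (g (w (c, τ)))‖ ≤ t (c,τ) * (ρ / 8) :=
              mul_le_mul_of_nonneg_left h1 htpos.le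
          _ = (1 / 4) * e := by rw [htval]; field_simp; ring
  -- the iteration
  set it : ℕ → X × Y → X := fun n =>
    Nat.rec (fun p => p.1) (fun _ f p => W (f p, p.2)) n with hitdef
  have hitzero : ∀ p, it 0 p = p.1 := fun p => rfl
  have hitsucc : ∀ n p, it (n + 1) p = W (it n p, p.2) := fun n p => rfl
  have hitcont : ∀ n, Continuous (it n) := by
    intro n
    induction n with
    | zero => exact continuous_fst
    | succ n ih => exact hWcont.comp (ih.prodMk continuous_snd)
  set S : Set (X × Y) := {p | p.1 ∈ C ∧ ‖p.1 - x₀‖ ≤ 2 ∧ ‖p.2 - y₀‖ ≤ ρ / 4 ∧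
    ‖p.2 - Λ p.1‖ ≤ εs} with hSdef
  have hinv : ∀ p ∈ S, ∀ n, it n p ∈ C ∧
      ‖p.2 - Λ (it n p)‖ ≤ (1/4 : ℝ)^n * ‖p.2 - Λ p.1‖ ∧
      ‖it n p - p.1‖ ≤ b * (1 - (1/4 : ℝ)^n) * ‖p.2 - Λ p.1‖ := by
    rintro p ⟨hp1, hp2, hp3, hp4⟩ n
    induction n with
    | zero =>
        refine ⟨hp1, ?_, ?_⟩
        · rw [hitzero]; norm_num
        · rw [hitzero]; norm_num
    | succ n ih =>
        obtain ⟨ih1, ih2, ih3⟩ := ih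
        have hq1 : (1/4 : ℝ)^n ≤ 1 := pow_le_one₀ (by norm_num) (by norm_num)
        have hq0 : (0:ℝ) < (1/4 : ℝ)^n := by positivity
        have hnorm0 : (0:ℝ) ≤ ‖p.2 - Λ p.1‖ := norm_nonneg _
        -- hypotheses for the step at (it n p, p.2)
        have hx3 : ‖it n p - x₀‖ ≤ 3 := by
          have h1 : ‖it n p - x₀‖ ≤ ‖it n p - p.1‖ + ‖p.1 - x₀‖ := by
            have := norm_add_le (it n p - p.1) (p.1 - x₀)
            simpa using this
          have h2 : b * (1 - (1/4 : ℝ)^n) * ‖p.2 - Λ p.1‖ ≤ b * εs := by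
            have e1 : b * (1 - (1/4 : ℝ)^n) * ‖p.2 - Λ p.1‖ ≤ b * 1 * ‖p.2 - Λ p.1‖ := by
              apply mul_le_mul_of_nonneg_right ?_ hnorm0
              apply mul_le_mul_of_nonneg_left ?_ hbpos.le
              linarith
            have e2 : b * 1 * ‖p.2 - Λ p.1‖ ≤ b * εs :=
              by rw [mul_one]; exact mul_le_mul_of_nonneg_left hp4 hbpos.le
            linarith
          rw [hbεs] at h2
          linarith
        have he : ‖p.2 - Λ (it n p)‖ ≤ εs := by
          calc ‖p.2 - Λ (it n p)‖ ≤ (1/4 : ℝ)^n * ‖p.2 - Λ p.1‖ := ih2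
            _ ≤ 1 * ‖p.2 - Λ p.1‖ := mul_le_mul_of_nonneg_right hq1 hnorm0
            _ = ‖p.2 - Λ p.1‖ := one_mul _
            _ ≤ εs := hp4
        obtain ⟨hs1, hs2, hs3⟩ := hWstep (it n p, p.2) ih1 hx3 hp3 he
        rw [hitsucc]
        refine ⟨hs1, ?_, ?_⟩
        · calc ‖p.2 - Λ (W (it n p, p.2))‖ ≤ (1/4) * ‖p.2 - Λ (it n p)‖ := hs3
            _ ≤ (1/4) * ((1/4 : ℝ)^n * ‖p.2 - Λ p.1‖) := by linarith
            _ = (1/4 : ℝ)^(n+1) * ‖p.2 - Λ p.1‖ := by rw [pow_succ]; ring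
        · have h1 : ‖W (it n p, p.2) - p.1‖ ≤
              ‖W (it n p, p.2) - it n p‖ + ‖it n p - p.1‖ := by
            have := norm_add_le (W (it n p, p.2) - it n p) (it n p - p.1)
            simpa using this
          have h2 : ‖W (it n p, p.2) - it n p‖ ≤ (2 * M / ρ) * ((1/4 : ℝ)^n * ‖p.2 - Λ p.1‖) := by
            calc ‖W (it n p, p.2) - it n p‖ ≤ (2 * M / ρ) * ‖p.2 - Λ (it n p)‖ := hs2
              _ ≤ (2 * M / ρ) * ((1/4 : ℝ)^n * ‖p.2 - Λ p.1‖) := by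
                  apply mul_le_mul_of_nonneg_left ih2 (by positivity)
          have hb34 : 2 * M / ρ = (3 / 4) * b := by
            rw [hbdef]
            field_simp
            ring
          calc ‖W (it n p, p.2) - p.1‖
              ≤ (3/4) * b * ((1/4 : ℝ)^n * ‖p.2 - Λ p.1‖) +
                b * (1 - (1/4 : ℝ)^n) * ‖p.2 - Λ p.1‖ := by
                rw [hb34] at h2
                linarith
            _ = b * (1 - (1/4 : ℝ)^(n+1)) * ‖p.2 - Λ p.1‖ := by rw [pow_succ]; ring
  -- telescoping bound
  have htel : ∀ p ∈ S, ∀ n k, ‖it (n + k) p - it n p‖ ≤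
      b * (1/4 : ℝ)^n * (1 - (1/4 : ℝ)^k) * ‖p.2 - Λ p.1‖ := by
    intro p hp n k
    induction k with
    | zero =>
        have : n + 0 = n := rfl
        rw [this, sub_self, norm_zero]
        norm_num
    | succ k ih =>
        obtain ⟨hp1, hp2, hp3, hp4⟩ := hp
        have hnorm0 : (0:ℝ) ≤ ‖p.2 - Λ p.1‖ := norm_nonneg _
        obtain ⟨ih1, ih2, ih3⟩ := hinv p ⟨hp1, hp2, hp3, hp4⟩ (n + k)
        have hq1 : (1/4 : ℝ)^(n+k) ≤ 1 := pow_le_one₀ (by norm_num) (by norm_num)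
        -- one more step
        have hx3 : ‖it (n+k) p - x₀‖ ≤ 3 := by
          have h1 : ‖it (n+k) p - x₀‖ ≤ ‖it (n+k) p - p.1‖ + ‖p.1 - x₀‖ := by
            have := norm_add_le (it (n+k) p - p.1) (p.1 - x₀)
            simpa using this
          have hqn : (1/4 : ℝ)^(n+k) ≤ 1 := hq1
          have h2 : b * (1 - (1/4 : ℝ)^(n+k)) * ‖p.2 - Λ p.1‖ ≤ b * εs := by
            have hq0' : (0:ℝ) < (1/4 : ℝ)^(n+k) := by positivity
            have e1 : b * (1 - (1/4 : ℝ)^(n+k)) * ‖p.2 - Λ p.1‖ ≤ b * 1 * ‖p.2 - Λ p.1‖ := by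
              apply mul_le_mul_of_nonneg_right ?_ hnorm0
              apply mul_le_mul_of_nonneg_left ?_ hbpos.le
              linarith
            have e2 : b * 1 * ‖p.2 - Λ p.1‖ ≤ b * εs :=
              by rw [mul_one]; exact mul_le_mul_of_nonneg_left hp4 hbpos.le
            linarith
          rw [hbεs] at h2
          linarith
        have he : ‖p.2 - Λ (it (n+k) p)‖ ≤ εs := by
          calc ‖p.2 - Λ (it (n+k) p)‖ ≤ (1/4 : ℝ)^(n+k) * ‖p.2 - Λ p.1‖ := ih2
            _ ≤ 1 * ‖p.2 - Λ p.1‖ := mul_le_mul_of_nonneg_right hq1 hnorm0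
            _ = ‖p.2 - Λ p.1‖ := one_mul _
            _ ≤ εs := hp4
        obtain ⟨hs1, hs2, hs3⟩ := hWstep (it (n+k) p, p.2) ih1 hx3 hp3 he
        have hstep : ‖it (n + (k+1)) p - it (n+k) p‖ ≤
            (3/4) * b * ((1/4 : ℝ)^(n+k) * ‖p.2 - Λ p.1‖) := by
          have heq : n + (k + 1) = (n + k) + 1 := by omega
          rw [heq, hitsucc]
          have hb34 : 2 * M / ρ = (3 / 4) * b := by
            rw [hbdef]
            field_simp
            ring
          calc ‖W (it (n+k) p, p.2) - it (n+k) p‖ ≤ (2 * M / ρ) * ‖p.2 - Λ (it (n+k) p)‖ := hs2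
            _ ≤ (2 * M / ρ) * ((1/4 : ℝ)^(n+k) * ‖p.2 - Λ p.1‖) := by
                apply mul_le_mul_of_nonneg_left ih2 (by positivity)
            _ = (3/4) * b * ((1/4 : ℝ)^(n+k) * ‖p.2 - Λ p.1‖) := by rw [hb34]
        have htri : ‖it (n + (k+1)) p - it n p‖ ≤
            ‖it (n + (k+1)) p - it (n+k) p‖ + ‖it (n+k) p - it n p‖ := by
          have := norm_add_le (it (n + (k+1)) p - it (n+k) p) (it (n+k) p - it n p)
          simpa using this
        have hqnk : (1/4 : ℝ)^(n+k) = (1/4 : ℝ)^n * (1/4 : ℝ)^k := pow_add _ _ _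
        calc ‖it (n + (k+1)) p - it n p‖
            ≤ (3/4) * b * ((1/4 : ℝ)^(n+k) * ‖p.2 - Λ p.1‖) +
              b * (1/4 : ℝ)^n * (1 - (1/4 : ℝ)^k) * ‖p.2 - Λ p.1‖ := by linarith
          _ = b * (1/4 : ℝ)^n * (1 - (1/4 : ℝ)^(k+1)) * ‖p.2 - Λ p.1‖ := by
              rw [hqnk, pow_succ]
              ring
  have htel' : ∀ p ∈ S, ∀ n k, ‖it (n + k) p - it n p‖ ≤ b * (1/4 : ℝ)^n * εs := by
    intro p hp n k
    have h1 := htel p hp n k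
    have hp4 := hp.2.2.2
    have hq0 : (0:ℝ) < (1/4 : ℝ)^k := by positivity
    have hq1 : (1/4 : ℝ)^k ≤ 1 := pow_le_one₀ (by norm_num) (by norm_num)
    have hnorm0 : (0:ℝ) ≤ ‖p.2 - Λ p.1‖ := norm_nonneg _
    have hqn0 : (0:ℝ) < (1/4 : ℝ)^n := by positivity
    have e1 : b * (1/4 : ℝ)^n * (1 - (1/4 : ℝ)^k) * ‖p.2 - Λ p.1‖ ≤
        b * (1/4 : ℝ)^n * 1 * ‖p.2 - Λ p.1‖ := by
      apply mul_le_mul_of_nonneg_right ?_ hnorm0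
      apply mul_le_mul_of_nonneg_left (by linarith) (by positivity)
    have e2 : b * (1/4 : ℝ)^n * 1 * ‖p.2 - Λ p.1‖ ≤ b * (1/4 : ℝ)^n * εs := by
      rw [mul_one]
      exact mul_le_mul_of_nonneg_left hp4 (by positivity)
    linarith
  -- the limit map
  have hlim : ∀ p : X × Y, ∃ L, p ∈ S → Tendsto (fun n => it n p) atTop (𝓝 L) := by
    intro p
    by_cases hp : p ∈ S
    · have hcauchy : CauchySeq (fun n => it n p) := by
        apply cauchySeq_of_le_geometric (1/4 : ℝ) (b * εs) (by norm_num)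
        intro n
        rw [dist_eq_norm, norm_sub_rev]
        have := htel' p hp n 1
        calc ‖it (n+1) p - it n p‖ ≤ b * (1/4 : ℝ)^n * εs := this
          _ = b * εs * (1/4 : ℝ)^n := by ring
      obtain ⟨L, hL⟩ := cauchySeq_tendsto_of_complete hcauchy
      exact ⟨L, fun _ => hL⟩
    · exact ⟨x₀, fun h => absurd h hp⟩
  choose F hF using hlim
  -- properties of F on S
  have hFC : ∀ p ∈ S, F p ∈ C := by
    intro p hp
    exact hCcl.mem_of_tendsto (hF p hp)
      (Filter.Eventually.of_forall (fun n => (hinv p hp n).1))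
  have hq14 : Tendsto (fun n : ℕ => (1/4 : ℝ)^n) atTop (𝓝 0) :=
    tendsto_pow_atTop_nhds_zero_of_lt_one (by norm_num) (by norm_num)
  have hFΛ : ∀ p ∈ S, Λ (F p) = p.2 := by
    intro p hp
    have h1 : Tendsto (fun n => Λ (it n p)) atTop (𝓝 (Λ (F p))) :=
      (Λ.continuous.tendsto _).comp (hF p hp)
    have h2 : Tendsto (fun n => Λ (it n p)) atTop (𝓝 p.2) := by
      rw [tendsto_iff_dist_tendsto_zero]
      apply squeeze_zero (fun n => dist_nonneg)
        (g := fun n => (1/4 : ℝ)^n * ‖p.2 - Λ p.1‖)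
      · intro n
        rw [dist_eq_norm, norm_sub_rev]
        exact (hinv p hp n).2.1
      · simpa using hq14.mul_const ‖p.2 - Λ p.1‖
    exact tendsto_nhds_unique h1 h2
  have hFest : ∀ p ∈ S, ‖F p - p.1‖ ≤ b * ‖p.2 - Λ p.1‖ := by
    intro p hp
    have h1 : Tendsto (fun n => ‖it n p - p.1‖) atTop (𝓝 ‖F p - p.1‖) :=
      ((hF p hp).sub tendsto_const_nhds).norm
    apply le_of_tendsto h1
    apply Filter.Eventually.of_forall
    intro n
    have h2 := (hinv p hp n).2.2
    have hq1 : (1/4 : ℝ)^n ≤ 1 := pow_le_one₀ (by norm_num) (by norm_num)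
    have hq0 : (0:ℝ) < (1/4 : ℝ)^n := by positivity
    have hnorm0 : (0:ℝ) ≤ ‖p.2 - Λ p.1‖ := norm_nonneg _
    have e1 : b * (1 - (1/4 : ℝ)^n) * ‖p.2 - Λ p.1‖ ≤ b * 1 * ‖p.2 - Λ p.1‖ := by
      apply mul_le_mul_of_nonneg_right ?_ hnorm0
      apply mul_le_mul_of_nonneg_left (by linarith) hbpos.le
    have e2 : b * 1 * ‖p.2 - Λ p.1‖ = b * ‖p.2 - Λ p.1‖ := by ring
    linarith
  have hFbound : ∀ p ∈ S, ∀ n, ‖F p - it n p‖ ≤ b * (1/4 : ℝ)^n * εs := by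
    intro p hp n
    have h1 : Tendsto (fun k => it (n + k) p) atTop (𝓝 (F p)) := by
      have := (hF p hp).comp (tendsto_add_atTop_nat n)
      simpa [Function.comp_def, Nat.add_comm] using this
    have h2 : Tendsto (fun k => ‖it (n + k) p - it n p‖) atTop (𝓝 ‖F p - it n p‖) :=
      ((h1.sub tendsto_const_nhds)).norm
    exact le_of_tendsto h2 (Filter.Eventually.of_forall (fun k => htel' p hp n k))
  have hFcont : ContinuousOn F S := by
    have huni : TendstoUniformlyOn (fun n p => it n p) F atTop S := by
      rw [Metric.tendstoUniformlyOn_iff]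
      intro ε hε
      have h3 : Tendsto (fun n : ℕ => b * (1/4 : ℝ)^n * εs) atTop (𝓝 0) := by
        have := (hq14.const_mul b).mul_const εs
        simpa [mul_comm, mul_assoc] using this
      filter_upwards [h3.eventually (gt_mem_nhds hε)] with n hn p hp
      rw [dist_eq_norm]
      exact lt_of_le_of_lt (hFbound p hp n) hn
    exact huni.continuousOn (Filter.Eventually.of_forall (fun n => (hitcont n).continuousOn)).frequently
  -- final neighborhoods and constants
  set nΛ : ℝ := ‖Λ‖ + 1 with hnΛdef
  have hnΛpos : 0 < nΛ := by
    rw [hnΛdef]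
    have := norm_nonneg Λ
    linarith
  have hΛle : ∀ x : X, ‖Λ x‖ ≤ nΛ * ‖x‖ := by
    intro x
    calc ‖Λ x‖ ≤ ‖Λ‖ * ‖x‖ := Λ.le_opNorm x
      _ ≤ nΛ * ‖x‖ := by
          apply mul_le_mul_of_nonneg_right ?_ (norm_nonneg x)
          rw [hnΛdef]; linarith
  set r₁ : ℝ := min (1/3 : ℝ) (εs / (6 * nΛ)) with hr₁def
  have hr₁pos : 0 < r₁ := lt_min (by norm_num) (by positivity)
  have hr₁a : r₁ ≤ 1/3 := min_le_left _ _
  have hr₁b : r₁ ≤ εs / (6 * nΛ) := min_le_right _ _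
  set r₂ : ℝ := min (ρ / 4) (εs / 2) with hr₂def
  have hr₂pos : 0 < r₂ := lt_min (by positivity) (by positivity)
  have hr₂a : r₂ ≤ ρ / 4 := min_le_left _ _
  have hr₂b : r₂ ≤ εs / 2 := min_le_right _ _
  set V₁ : Set X := ball x₀ (r₁ / 2) with hV₁def
  set U₁ : Set Y := ball y₀ (r₂ / 2) with hU₁def
  set U₂ : Set X := ball (0 : X) (min (r₁ / 2) (r₂ / (2 * nΛ))) with hU₂def
  set a : ℝ := b * (1 + 2 * nΛ) + 2 with hadef
  have hapos : 0 < a := by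
    rw [hadef]
    nlinarith
  set R : X → Y → X → X := fun ξ σ₁ σ₂ => σ₂ + F (P (ξ - σ₂), σ₁ - Λ σ₂) with hRdef
  -- membership lemma
  have hmem : ∀ ξ ∈ V₁, ∀ σ₁ ∈ U₁, ∀ σ₂ ∈ U₂, (P (ξ - σ₂), σ₁ - Λ σ₂) ∈ S := by
    intro ξ hξ σ₁ hσ₁ σ₂ hσ₂
    rw [hV₁def, mem_ball, dist_eq_norm] at hξ
    rw [hU₁def, mem_ball, dist_eq_norm] at hσ₁
    rw [hU₂def, mem_ball, dist_eq_norm, sub_zero] at hσ₂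
    have hσ₂a : ‖σ₂‖ < r₁ / 2 := lt_of_lt_of_le hσ₂ (min_le_left _ _)
    have hσ₂b : ‖σ₂‖ < r₂ / (2 * nΛ) := lt_of_lt_of_le hσ₂ (min_le_right _ _)
    set η : X := ξ - σ₂ with hηdef
    set τ : Y := σ₁ - Λ σ₂ with hτdef
    have hηx₀ : ‖η - x₀‖ < r₁ := by
      calc ‖η - x₀‖ = ‖(ξ - x₀) + (-σ₂)‖ := by rw [hηdef]; congr 1; abel
        _ ≤ ‖ξ - x₀‖ + ‖σ₂‖ := by
            refine le_trans (norm_add_le _ _) ?_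
            rw [norm_neg]
        _ < r₁ / 2 + r₁ / 2 := add_lt_add hξ hσ₂a
        _ = r₁ := by ring
    have hτy₀ : ‖τ - y₀‖ ≤ r₂ := by
      calc ‖τ - y₀‖ = ‖(σ₁ - y₀) + (-(Λ σ₂))‖ := by rw [hτdef]; congr 1; abel
        _ ≤ ‖σ₁ - y₀‖ + ‖Λ σ₂‖ := by
            refine le_trans (norm_add_le _ _) ?_
            rw [norm_neg]
        _ ≤ r₂ / 2 + nΛ * ‖σ₂‖ := add_le_add hσ₁.le (hΛle σ₂)
        _ ≤ r₂ / 2 + nΛ * (r₂ / (2 * nΛ)) := by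
            have := mul_le_mul_of_nonneg_left hσ₂b.le hnΛpos.le
            linarith
        _ = r₂ := by field_simp; ring
    obtain ⟨hPC, hPd⟩ := hPprop η
    have hdle : infDist η C ≤ ‖η - x₀‖ := by
      have := infDist_le_dist_of_mem (x := η) hx₀
      rwa [dist_eq_norm] at this
    have hPx₀ : ‖P η - x₀‖ ≤ 3 * r₁ := by
      calc ‖P η - x₀‖ ≤ ‖P η - η‖ + ‖η - x₀‖ := by
            have := norm_add_le (P η - η) (η - x₀)
            simpa using this
        _ ≤ 2 * infDist η C + ‖η - x₀‖ := by
            rw [norm_sub_rev]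
            linarith [hPd]
        _ ≤ 3 * ‖η - x₀‖ := by linarith
        _ ≤ 3 * r₁ := by linarith
    refine ⟨hPC, ?_, by simpa using le_trans hτy₀ hr₂a, ?_⟩
    · simp only
      calc ‖P η - x₀‖ ≤ 3 * r₁ := hPx₀
        _ ≤ 1 := by linarith
        _ ≤ 2 := by norm_num
    · simp only
      calc ‖τ - Λ (P η)‖ ≤ ‖τ - y₀‖ + ‖y₀ - Λ (P η)‖ := by
            have := norm_add_le (τ - y₀) (y₀ - Λ (P η))
            simpa using this
        _ ≤ r₂ + ‖Λ (x₀ - P η)‖ := by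
            rw [hy₀def, ← map_sub]
            linarith [hτy₀]
        _ ≤ r₂ + nΛ * ‖x₀ - P η‖ := by linarith [hΛle (x₀ - P η)]
        _ ≤ εs / 2 + nΛ * (3 * r₁) := by
            have h1 : ‖x₀ - P η‖ ≤ 3 * r₁ := by rw [norm_sub_rev]; exact hPx₀
            have h1' := mul_le_mul_of_nonneg_left h1 hnΛpos.le
            exact add_le_add hr₂b h1'
        _ ≤ εs / 2 + εs / 2 := by
            have h2 : nΛ * (3 * r₁) ≤ nΛ * (3 * (εs / (6 * nΛ))) := by
              apply mul_le_mul_of_nonneg_left ?_ hnΛpos.le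
              linarith
            have h3 : nΛ * (3 * (εs / (6 * nΛ))) = εs / 2 := by field_simp; ring
            linarith
        _ = εs := by ring
  refine ⟨V₁, U₁, U₂, a, R, ?_, ?_, ?_, hapos, ?_, ?_⟩
  · exact ball_mem_nhds _ (by positivity)
  · exact ball_mem_nhds _ (by positivity)
  · exact ball_mem_nhds _ (by positivity)
  · -- continuity
    have hφcont : Continuous (fun p : X × Y × X => (P (p.1 - p.2.2), p.2.1 - Λ p.2.2)) := by
      apply Continuous.prodMk
      · exact hPcont.comp (continuous_fst.sub (continuous_snd.snd))
      · exact (continuous_snd.fst).sub (Λ.continuous.comp continuous_snd.snd)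
    have hmaps : MapsTo (fun p : X × Y × X => (P (p.1 - p.2.2), p.2.1 - Λ p.2.2))
        (V₁ ×ˢ U₁ ×ˢ U₂) S := by
      rintro ⟨ξ, σ₁, σ₂⟩ hp
      rw [mem_prod] at hp
      obtain ⟨hξ, hp2⟩ := hp
      rw [mem_prod] at hp2
      exact hmem ξ hξ σ₁ hp2.1 σ₂ hp2.2
    have h1 : ContinuousOn (fun p : X × Y × X => F (P (p.1 - p.2.2), p.2.1 - Λ p.2.2))
        (V₁ ×ˢ U₁ ×ˢ U₂) :=
      hFcont.comp hφcont.continuousOn hmaps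
    exact (continuous_snd.snd.continuousOn).add h1
  · -- the estimates
    intro ξ hξ σ₁ hσ₁ σ₂ hσ₂
    have hpS := hmem ξ hξ σ₁ hσ₁ σ₂ hσ₂
    set η : X := ξ - σ₂ with hηdef
    set τ : Y := σ₁ - Λ σ₂ with hτdef
    refine ⟨?_, ?_, ?_⟩
    · rw [hRdef]
      simp only
      rw [map_add, hFΛ _ hpS]
      show Λ σ₂ + τ = σ₁
      rw [hτdef]
      abel
    · exact ⟨F (P η, τ), hFC _ hpS, rfl⟩
    · have hd : infDist η C ≥ 0 := infDist_nonneg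
      obtain ⟨hPC, hPd⟩ := hPprop η
      have hRξ : R ξ σ₁ σ₂ - ξ = F (P η, τ) - η := by
        rw [hRdef]
        simp only
        rw [hηdef]
        abel
      rw [hRξ]
      have h1 : ‖F (P η, τ) - η‖ ≤ ‖F (P η, τ) - P η‖ + ‖P η - η‖ := by
        have := norm_add_le (F (P η, τ) - P η) (P η - η)
        simpa using this
      have h2 : ‖F (P η, τ) - P η‖ ≤ b * ‖τ - Λ (P η)‖ := hFest _ hpS
      have h3 : ‖τ - Λ η‖ = ‖Λ ξ - σ₁‖ := by
        rw [hτdef, hηdef, map_sub, norm_sub_rev]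
        congr 1
        abel
      have h4 : ‖τ - Λ (P η)‖ ≤ ‖Λ ξ - σ₁‖ + 2 * nΛ * infDist η C := by
        calc ‖τ - Λ (P η)‖ ≤ ‖τ - Λ η‖ + ‖Λ η - Λ (P η)‖ := by
              have := norm_add_le (τ - Λ η) (Λ η - Λ (P η))
              simpa using this
          _ = ‖Λ ξ - σ₁‖ + ‖Λ (η - P η)‖ := by rw [h3, ← map_sub]
          _ ≤ ‖Λ ξ - σ₁‖ + nΛ * ‖η - P η‖ := by linarith [hΛle (η - P η)]
          _ ≤ ‖Λ ξ - σ₁‖ + nΛ * (2 * infDist η C) := by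
              have := mul_le_mul_of_nonneg_left hPd hnΛpos.le
              linarith
          _ = ‖Λ ξ - σ₁‖ + 2 * nΛ * infDist η C := by ring
      have h5 : ‖P η - η‖ ≤ 2 * infDist η C := by rw [norm_sub_rev]; exact hPd
      have hσnorm : (0:ℝ) ≤ ‖Λ ξ - σ₁‖ := norm_nonneg _
      calc ‖F (P η, τ) - η‖ ≤ b * (‖Λ ξ - σ₁‖ + 2 * nΛ * infDist η C) + 2 * infDist η C := by
            have h6 := mul_le_mul_of_nonneg_left h4 hbpos.le
            linarith
        _ ≤ a * (‖Λ ξ - σ₁‖ + infDist η C) := by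
            rw [hadef]
            nlinarith [mul_nonneg (mul_nonneg hbpos.le hnΛpos.le) hσnorm,
              mul_nonneg hbpos.le hd, mul_nonneg hbpos.le hσnorm,
              mul_nonneg (mul_nonneg hbpos.le hnΛpos.le) hd]
end

section
/- Let U ⊆ ℝ with 0 ∈ int U and let g: ℝ → ℝ be continuous with g(0) = 0. Suppose the zero pair delivers a strong minimum for the problem of minimizing ∫₀¹ x(t) g(u(t)) dt subject to ẋ = u(t), x(0) = x(1) = 0, u(t) ∈ U a.e.; that is, there exists ρ > 0 such that for every u ∈ L∞([0,1]) with u(t) ∈ U a.e. and x(t) = ∫₀ᵗ u(s) ds satisfying x(1) = 0 and sup_{t∈[0,1]} |x(t)| < ρ, one has ∫₀¹ x(t) g(u(t)) dt ≥ 0. Then g is linear on some interval centered at the origin: there exist ε > 0 and c ∈ ℝ such that g(u) = c·u for all u ∈ [−ε, ε]. -/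
open MeasureTheory Set intervalIntegral Filter Topology

lemma int_congr_Ioo (f h : ℝ → ℝ) (p q : ℝ) (hpq : p ≤ q)
    (heq : ∀ s ∈ Ioo p q, f s = h s) :
    ∫ s in p..q, f s = ∫ s in p..q, h s := by
  have hq : ∀ᵐ s : ℝ, s ≠ q := by simp [ae_iff, Real.volume_singleton]
  apply intervalIntegral.integral_congr_ae
  filter_upwards [hq] with s hs hmem
  rw [uIoc_of_le hpq] at hmem
  exact heq s ⟨hmem.1, lt_of_le_of_ne hmem.2 hs⟩

lemma int_const_of_Ioo (f : ℝ → ℝ) (c p q : ℝ) (hpq : p ≤ q)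
    (h : ∀ s ∈ Ioo p q, f s = c) :
    ∫ s in p..q, f s = c * (q - p) := by
  rw [int_congr_Ioo f (fun _ => c) p q hpq h, intervalIntegral.integral_const,
    smul_eq_mul, mul_comm]

section uu
variable (a b α β : ℝ)

noncomputable def uu (t : ℝ) : ℝ := if t < α then a else if t < α + β then b else 0

lemma uu_meas : Measurable (uu a b α β) := by
  unfold uu
  exact Measurable.ite measurableSet_Iio measurable_const
    (Measurable.ite measurableSet_Iio measurable_const measurable_const)

lemma uu_vals (t : ℝ) : uu a b α β t = a ∨ uu a b α β t = b ∨ uu a b α β t = 0 := by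
  unfold uu
  split_ifs <;> simp

lemma uu_bound (t : ℝ) : |uu a b α β t| ≤ max |a| |b| := by
  rcases uu_vals a b α β t with h | h | h <;> rw [h]
  · exact le_max_left _ _
  · exact le_max_right _ _
  · simpa using le_trans (abs_nonneg a) (le_max_left |a| |b|)

lemma uu_ii (p q : ℝ) : IntervalIntegrable (uu a b α β) volume p q := by
  apply IntervalIntegrable.mono_fun' (g := fun _ => max |a| |b|) intervalIntegrable_const
  · exact ((uu_meas a b α β).aestronglyMeasurable)
  · exact ae_of_all _ fun t => uu_bound a b α β t

lemma xx_one (t : ℝ) (ht : t ∈ Icc 0 α) : (∫ s in (0:ℝ)..t, uu a b α β s) = a * t := by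
  rw [int_const_of_Ioo _ a 0 t ht.1]
  · ring
  · intro s hs
    unfold uu
    rw [if_pos (lt_of_lt_of_le hs.2 ht.2)]

lemma xx_two (hα : 0 ≤ α) (t : ℝ) (ht : t ∈ Icc α (α + β)) :
    (∫ s in (0:ℝ)..t, uu a b α β s) = a * α + b * (t - α) := by
  rw [← intervalIntegral.integral_add_adjacent_intervals (uu_ii a b α β 0 α) (uu_ii a b α β α t)]
  rw [xx_one a b α β α ⟨hα, le_refl α⟩]
  rw [int_const_of_Ioo _ b α t ht.1]
  intro s hs
  unfold uu
  rw [if_neg (not_lt.2 (le_of_lt hs.1)), if_pos (lt_of_lt_of_le hs.2 ht.2)]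

lemma xx_three (hα : 0 ≤ α) (hβ : 0 ≤ β) (hsum : a * α + b * β = 0)
    (t : ℝ) (ht : α + β ≤ t) :
    (∫ s in (0:ℝ)..t, uu a b α β s) = 0 := by
  rw [← intervalIntegral.integral_add_adjacent_intervals (uu_ii a b α β 0 (α+β))
    (uu_ii a b α β (α+β) t)]
  rw [xx_two a b α β hα (α+β) ⟨le_add_of_nonneg_right hβ, le_refl _⟩]
  rw [int_const_of_Ioo _ 0 (α+β) t ht]
  · rw [add_sub_cancel_left] at *
    linarith
  · intro s hs
    unfold uu
    rw [if_neg, if_neg]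
    · exact not_lt.2 (le_of_lt hs.1)
    · exact not_lt.2 (le_trans (le_add_of_nonneg_right hβ) (le_of_lt hs.1))

end uu

section total
variable (g : ℝ → ℝ) (a b α β : ℝ)

lemma g_uu_bound (t : ℝ) :
    |g (uu a b α β t)| ≤ max |g a| (max |g b| |g 0|) := by
  rcases uu_vals a b α β t with h | h | h <;> rw [h]
  · exact le_max_left _ _
  · exact le_trans (le_max_left _ _) (le_max_right _ _)
  · exact le_trans (le_max_right _ _) (le_max_right _ _)

lemma F_ii (hg : Continuous g) (p q : ℝ) (hp : 0 ≤ p) (hq : q ≤ 1) (hpq : p ≤ q) :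
    IntervalIntegrable (fun t => (∫ s in (0:ℝ)..t, uu a b α β s) * g (uu a b α β t))
      volume p q := by
  set M := max |a| |b| with hM
  set N := max |g a| (max |g b| |g 0|) with hN
  have hM0 : 0 ≤ M := le_trans (abs_nonneg a) (le_max_left _ _)
  have hxc : Continuous (fun t => ∫ s in (0:ℝ)..t, uu a b α β s) :=
    intervalIntegral.continuous_primitive (uu_ii a b α β) 0
  apply IntervalIntegrable.mono_fun' (g := fun _ => M * N) intervalIntegrable_const
  · exact ((hxc.measurable.mul (hg.measurable.comp (uu_meas a b α β))).aestronglyMeasurable)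
  · filter_upwards [ae_restrict_mem measurableSet_uIoc] with t ht
    rw [uIoc_of_le hpq] at ht
    have h1 : |∫ s in (0:ℝ)..t, uu a b α β s| ≤ M * |t - 0| := by
      have := intervalIntegral.norm_integral_le_of_norm_le_const
        (C := M) (f := uu a b α β) (a := 0) (b := t) (fun x _ => uu_bound a b α β x)
      simpa [Real.norm_eq_abs] using this
    have ht1 : |t - 0| ≤ 1 := by
      rw [sub_zero, abs_of_pos (lt_of_le_of_lt hp ht.1)]
      exact le_trans ht.2 hq
    have hxb : |∫ s in (0:ℝ)..t, uu a b α β s| ≤ M := by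
      nlinarith [abs_nonneg (∫ s in (0:ℝ)..t, uu a b α β s)]
    have : ‖(∫ s in (0:ℝ)..t, uu a b α β s) * g (uu a b α β t)‖
        = |∫ s in (0:ℝ)..t, uu a b α β s| * |g (uu a b α β t)| := by
      rw [Real.norm_eq_abs, abs_mul]
    rw [this]
    exact mul_le_mul hxb (g_uu_bound g a b α β t) (abs_nonneg _) hM0

lemma total_integral (hg : Continuous g) (hg0 : g 0 = 0)
    (hα : 0 ≤ α) (hβ : 0 ≤ β) (h1 : α + β ≤ 1) (hsum : a * α + b * β = 0) :
    (∫ t in (0:ℝ)..1, (∫ s in (0:ℝ)..t, uu a b α β s) * g (uu a b α β t))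
      = g a * a * α^2/2 - g b * b * β^2/2 := by
  have hαβ : α + β ≤ 1 := h1
  have hii1 := F_ii g a b α β hg 0 α le_rfl (by linarith) hα
  have hii2 := F_ii g a b α β hg α (α+β) hα (by linarith) (by linarith)
  have hii3 := F_ii g a b α β hg (α+β) 1 (by linarith) le_rfl hαβ
  rw [← intervalIntegral.integral_add_adjacent_intervals (hii1.trans hii2) hii3,
      ← intervalIntegral.integral_add_adjacent_intervals hii1 hii2]
  have S1 : (∫ t in (0:ℝ)..α, (∫ s in (0:ℝ)..t, uu a b α β s) * g (uu a b α β t))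
      = (a * g a) * (α^2/2) := by
    rw [int_congr_Ioo _ (fun t => (a * g a) * t) 0 α hα]
    · rw [intervalIntegral.integral_const_mul, integral_id]
      ring
    · intro t ht
      rw [xx_one a b α β t ⟨le_of_lt ht.1, le_of_lt ht.2⟩]
      show a * t * g (uu a b α β t) = _
      unfold uu
      rw [if_pos ht.2]
      ring
  have S2 : (∫ t in α..(α+β), (∫ s in (0:ℝ)..t, uu a b α β s) * g (uu a b α β t))
      = g b * ((a * α - b * α) * β + b * (((α+β)^2 - α^2)/2)) := by
    rw [int_congr_Ioo _ (fun t => g b * ((a * α - b * α) + b * t)) α (α+β) (by linarith)]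
    · rw [intervalIntegral.integral_const_mul, intervalIntegral.integral_add
        intervalIntegrable_const (intervalIntegrable_id.const_mul b),
        intervalIntegral.integral_const, intervalIntegral.integral_const_mul, integral_id,
        smul_eq_mul]
      ring
    · intro t ht
      rw [xx_two a b α β hα t ⟨le_of_lt ht.1, le_of_lt ht.2⟩]
      show (a * α + b * (t - α)) * g (uu a b α β t) = _
      unfold uu
      rw [if_neg (not_lt.2 (le_of_lt ht.1)), if_pos ht.2]
      ring
  have S3 : (∫ t in (α+β)..1, (∫ s in (0:ℝ)..t, uu a b α β s) * g (uu a b α β t))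
      = 0 := by
    rw [int_congr_Ioo _ (fun _ => (0:ℝ)) (α+β) 1 hαβ]
    · simp
    · intro t ht
      show (∫ s in (0:ℝ)..t, uu a b α β s) * g (uu a b α β t) = 0
      unfold uu
      rw [if_neg, if_neg]
      · rw [hg0, mul_zero]
      · exact not_lt.2 (le_of_lt ht.1)
      · exact not_lt.2 (le_trans (le_add_of_nonneg_right hβ) (le_of_lt ht.1))
  rw [S1, S2, S3]
  linear_combination g b * β * hsum

end total

/-- **Example 2 (Proposition):** if the zero pair delivers a strong minimum for
`∫₀¹ x g(u) dt → inf`, `ẋ = u`, `x(0) = x(1) = 0`, `u(t) ∈ U` a.e., with `0 ∈ int U`,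
`g` continuous, `g(0) = 0`, then `g` is linear on an interval centered at `0`. -/
theorem example_two
    (U : Set ℝ) (hU : (0 : ℝ) ∈ interior U)
    (g : ℝ → ℝ) (hg : Continuous g) (hg0 : g 0 = 0)
    (hmin : ∃ ρ > (0:ℝ), ∀ u : ℝ → ℝ, Measurable u →
      (∃ C : ℝ, ∀ᵐ t ∂(volume.restrict (Icc (0:ℝ) 1)), |u t| ≤ C) →
      (∀ᵐ t ∂(volume.restrict (Icc (0:ℝ) 1)), u t ∈ U) →
      (∫ s in (0:ℝ)..1, u s) = 0 →
      (∀ t ∈ Icc (0:ℝ) 1, |∫ s in (0:ℝ)..t, u s| < ρ) →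
      0 ≤ ∫ t in (0:ℝ)..1, (∫ s in (0:ℝ)..t, u s) * g (u t)) :
    ∃ ε > (0:ℝ), ∃ c : ℝ, ∀ v ∈ Icc (-ε) ε, g v = c * v := by
  obtain ⟨ρ, hρ, hmin'⟩ := hmin
  have h0U : (0:ℝ) ∈ U := interior_subset hU
  -- Key inequality from needle variations
  have key : ∀ a b : ℝ, a ∈ U → b ∈ U → a * b < 0 →
      0 ≤ g a * a * b^2 - g b * b * a^2 := by
    intro a b haU hbU hab
    have ha0 : a ≠ 0 := by rintro rfl; simp at hab
    have hb0 : b ≠ 0 := by rintro rfl; simp at hab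
    have haa : 0 < |a| := abs_pos.2 ha0
    have hbb : 0 < |b| := abs_pos.2 hb0
    have hS : 0 < |a| + |b| := by positivity
    set δ := min (1/(|a| + |b|)) (ρ/(1 + |a| * |b|)) with hδdef
    have hδ : 0 < δ := lt_min (by positivity) (by positivity)
    set α := |b| * δ with hαdef
    set β := |a| * δ with hβdef
    have hα : 0 ≤ α := by positivity
    have hβ : 0 ≤ β := by positivity
    have hsum : a * α + b * β = 0 := by
      rcases mul_neg_iff.1 hab with ⟨ha, hb⟩ | ⟨ha, hb⟩
      · rw [hαdef, hβdef, abs_of_pos ha, abs_of_neg hb]; ring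
      · rw [hαdef, hβdef, abs_of_neg ha, abs_of_pos hb]; ring
    have hαβ : α + β ≤ 1 := by
      have h1 : δ ≤ 1/(|a| + |b|) := min_le_left _ _
      rw [le_div_iff₀ hS] at h1
      have : α + β = (|a| + |b|) * δ := by rw [hαdef, hβdef]; ring
      rw [this]; linarith [mul_comm δ (|a| + |b|)]
    have hsup : |a| * α < ρ := by
      have h2 : δ ≤ ρ/(1 + |a| * |b|) := min_le_right _ _
      rw [le_div_iff₀ (by positivity)] at h2
      rw [hαdef]
      nlinarith
    have hsupt : ∀ t ∈ Icc (0:ℝ) 1, |∫ s in (0:ℝ)..t, uu a b α β s| < ρ := by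
      intro t ht
      rcases le_total t α with h | h
      · rw [xx_one a b α β t ⟨ht.1, h⟩, abs_mul]
        have : |t| ≤ α := by rw [abs_of_nonneg ht.1]; exact h
        calc |a| * |t| ≤ |a| * α := mul_le_mul_of_nonneg_left this (abs_nonneg a)
          _ < ρ := hsup
      · rcases le_total t (α + β) with h' | h'
        · rw [xx_two a b α β hα t ⟨h, h'⟩]
          have hx : a * α + b * (t - α) = b * (t - (α + β)) := by linear_combination hsum
          rw [hx, abs_mul]
          have h3 : |t - (α + β)| ≤ β := by
            rw [abs_of_nonpos (by linarith)]; linarith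
          have h4 : |b| * β = |a| * α := by rw [hαdef, hβdef]; ring
          calc |b| * |t - (α + β)| ≤ |b| * β :=
                mul_le_mul_of_nonneg_left h3 (abs_nonneg b)
            _ = |a| * α := h4
            _ < ρ := hsup
        · rw [xx_three a b α β hα hβ hsum t h']
          simpa using hρ
    have happ := hmin' (uu a b α β) (uu_meas a b α β)
      ⟨max |a| |b|, ae_of_all _ (uu_bound a b α β)⟩
      (ae_of_all _ fun t => by
        rcases uu_vals a b α β t with h | h | h <;> rw [h] <;> assumption)
      (xx_three a b α β hα hβ hsum 1 hαβ)
      hsupt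
    rw [total_integral g a b α β hg hg0 hα hβ hαβ hsum] at happ
    have hα2 : α^2 = b^2 * δ^2 := by rw [hαdef, mul_pow, sq_abs]
    have hβ2 : β^2 = a^2 * δ^2 := by rw [hβdef, mul_pow, sq_abs]
    rw [hα2, hβ2] at happ
    have hδ2 : 0 < δ^2 := by positivity
    nlinarith [happ, hδ2]
  -- From key, the proportionality relation
  have rel : ∀ p q : ℝ, p ∈ U → q ∈ U → p * q < 0 → q * g p = p * g q := by
    intro p q hp hq hpq
    have k1 := key p q hp hq hpq
    have k2 := key q p hq hp (by linarith [mul_comm p q])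
    have hE : g p * p * q^2 - g q * q * p^2 = 0 := by linarith
    have h5 : (p * q) * (q * g p - p * g q) = 0 := by linear_combination hE
    have := (mul_eq_zero.1 h5).resolve_left (ne_of_lt hpq)
    linarith
  obtain ⟨ε, hε, hball⟩ := Metric.mem_nhds_iff.1 (mem_interior_iff_mem_nhds.1 hU)
  have memU : ∀ v : ℝ, |v| ≤ ε/2 → v ∈ U := by
    intro v hv
    apply hball
    rw [Metric.mem_ball, Real.dist_eq, sub_zero]
    linarith
  have hε2 : (0:ℝ) < ε/2 := by linarith
  have hε2' : (ε/2 : ℝ) ≠ 0 := ne_of_gt hε2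
  have ha₀ : (ε/2) ∈ U := memU _ (by rw [abs_of_pos hε2])
  have hb₀ : (-(ε/2)) ∈ U := memU _ (by rw [abs_neg, abs_of_pos hε2])
  refine ⟨ε/2, hε2, g (ε/2) / (ε/2), ?_⟩
  intro v hv
  have hv' : |v| ≤ ε/2 := abs_le.2 ⟨hv.1, hv.2⟩
  have hvU : v ∈ U := memU v hv'
  rcases lt_trichotomy v 0 with h | h | h
  · have h4 := rel (ε/2) v ha₀ hvU (mul_neg_of_pos_of_neg hε2 h)
    rw [div_mul_eq_mul_div, eq_div_iff hε2']
    linear_combination (-1) * h4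
  · rw [h, hg0, mul_zero]
  · have h1 := rel v (-(ε/2)) hvU hb₀ (mul_neg_of_pos_of_neg h (by linarith))
    have h2 := rel (ε/2) (-(ε/2)) ha₀ hb₀ (mul_neg_of_pos_of_neg hε2 (by linarith))
    have h3 : (ε/2) * (g (-(ε/2)) + g (ε/2)) = 0 := by linear_combination -h2
    have hneg : g (-(ε/2)) = -g (ε/2) := by
      have := (mul_eq_zero.1 h3).resolve_left hε2'
      linarith
    have h4 : (ε/2) * g v = v * g (ε/2) := by linear_combination (-1) * h1 - v * hneg
    rw [div_mul_eq_mul_div, eq_div_iff hε2']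
    linear_combination h4
end
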